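/- arXiv:2305.00140 — 2 statements merged into one kernel-verified Lean document; each statement's English description precedes it below -/
import Mathlib

section
/- (Key step of the Iterated Major Order Theorem for Kemeny's rule) Let V be an election over a finite set C of alternatives and let U be a set of ordered pairs of distinct alternatives such that for every (a,b) ∈ U, a is ranked before b in every 2-wise median of V. Let x, y be distinct alternatives and set L_{x,y} = {z ∈ C : (z,x) ∈ U and (z,y) ∈ U}, R_{x,y} = {z ∈ C : (x,z) ∈ U and (y,z) ∈ U}, and Z' = C ∖ (L_{x,y} ∪ R_{x,y} ∪ {x,y}). If 2δ_{xy} > Σ_{z ∈ Z'} max(0, δ_{yz} + δ_{zx}), then x is ranked before y in every 2-wise median of V. -/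
open Finset

variable {α : Type}

/-- A ranking of the alternatives: a duplicate-free list containing every
alternative; earlier in the list means more preferred. -/
def IsRanking (l : List α) : Prop := l.Nodup ∧ ∀ a : α, a ∈ l

/-- The 3-wise Kendall tau distance between two rankings: the number of subsets
`S` with `|S| ≤ 3` on which the two rankings have different top elements. -/
def d3 [Fintype α] [DecidableEq α] (l m : List α) : ℕ :=
  ((Finset.univ : Finset α).powerset.filter
    (fun S => S.card ≤ 3 ∧ ∃ a ∈ S, ∃ b ∈ S, a ≠ b ∧
      (∀ c ∈ S, l.idxOf a ≤ l.idxOf c) ∧ (∀ c ∈ S, m.idxOf b ≤ m.idxOf c))).card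

/-- Total 3-wise Kendall tau distance from a ranking to a voting profile. -/
def d3V [Fintype α] [DecidableEq α] (l : List α) (V : Multiset (List α)) : ℕ :=
  (V.map (fun v => d3 l v)).sum

/-- A 3-wise median of the voting profile `V`. -/
def IsMedian3 [Fintype α] [DecidableEq α] (V : Multiset (List α)) (l : List α) : Prop :=
  IsRanking l ∧ ∀ m : List α, IsRanking m → d3V l V ≤ d3V m V

/-- The 2-wise Kendall tau distance between two rankings: the number of
two-element subsets on which the relative orders differ. -/
def d2 [Fintype α] [DecidableEq α] (l m : List α) : ℕ :=
  ((Finset.univ : Finset α).powerset.filter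
    (fun S => S.card = 2 ∧ ∃ a ∈ S, ∃ b ∈ S,
      l.idxOf a < l.idxOf b ∧ m.idxOf b < m.idxOf a)).card

/-- Total 2-wise Kendall tau distance from a ranking to a voting profile. -/
def d2V [Fintype α] [DecidableEq α] (l : List α) (V : Multiset (List α)) : ℕ :=
  (V.map (fun v => d2 l v)).sum

/-- A 2-wise median of the voting profile `V`. -/
def IsMedian2 [Fintype α] [DecidableEq α] (V : Multiset (List α)) (l : List α) : Prop :=
  IsRanking l ∧ ∀ m : List α, IsRanking m → d2V l V ≤ d2V m V

/-- `x ≥ₛ y`: `x` is ranked before `y` in at least `s·|V|` votes. -/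
def geq [DecidableEq α] (V : Multiset (List α)) (s : ℝ) (x y : α) : Prop :=
  s * (V.card : ℝ) ≤ (V.countP (fun v => v.idxOf x < v.idxOf y) : ℝ)

/-- `x` is a non-dirty alternative with respect to the threshold `s`. -/
def NonDirty [DecidableEq α] (V : Multiset (List α)) (s : ℝ) (x : α) : Prop :=
  ∀ y : α, y ≠ x → geq V s x y ∨ geq V s y x

/-- The election satisfies the `3/4`-majority rule with respect to the 3-wise
Kemeny voting scheme. -/
def Satisfies34 [Fintype α] [DecidableEq α] (V : Multiset (List α)) : Prop :=
  ∀ x : α, NonDirty V (3/4) x → ∀ y : α, y ≠ x →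
    (geq V (3/4) x y → ∀ π : List α, IsMedian3 V π → π.idxOf x < π.idxOf y) ∧
    (geq V (3/4) y x → ∀ π : List α, IsMedian3 V π → π.idxOf y < π.idxOf x)

/-- `n_{xy}`: the number of votes ranking `x` before `y`. -/
def nn2 [DecidableEq α] (V : Multiset (List α)) (x y : α) : ℕ :=
  V.countP (fun v => v.idxOf x < v.idxOf y)

/-- `n_{xyz}`: the number of votes ranking `x` before `y` before `z`. -/
def nn3 [DecidableEq α] (V : Multiset (List α)) (x y z : α) : ℕ :=
  V.countP (fun v => v.idxOf x < v.idxOf y ∧ v.idxOf y < v.idxOf z)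

/-- `n_{xyzt}`: the number of votes ranking `x` before `y` before `z` before `t`. -/
def nn4 [DecidableEq α] (V : Multiset (List α)) (x y z t : α) : ℕ :=
  V.countP (fun v => v.idxOf x < v.idxOf y ∧ v.idxOf y < v.idxOf z ∧
    v.idxOf z < v.idxOf t)

/-- `δ_{xy} = n_{xy} - n_{yx}`. -/
def del [DecidableEq α] (V : Multiset (List α)) (x y : α) : ℤ :=
  (nn2 V x y : ℤ) - nn2 V y x

/-- `P_{x,y,z}`. -/
def Pq [DecidableEq α] (V : Multiset (List α)) (x y z : α) : ℤ :=
  3 * (nn3 V x z y : ℤ) + nn3 V x y z + nn3 V z x y + nn3 V z y x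
    - 4 * nn3 V y z x - 2 * nn3 V y x z

/-- `Q_{x,y,z}`. -/
def Qq [DecidableEq α] (V : Multiset (List α)) (x y z : α) : ℤ :=
  (nn3 V x y z : ℤ) + nn3 V x z y - nn3 V y x z - nn3 V y z x

/-- `R_{y,x,z,t}`. -/
def Rr [DecidableEq α] (V : Multiset (List α)) (y x z t : α) : ℤ :=
  2 * (nn4 V y z t x : ℤ) + 2 * nn4 V y z x t + nn4 V y t z x + nn4 V y t x z

/-- `S_{y,x,z,t} = R_{y,x,z,t} - R_{x,y,z,t}`. -/
def Ss [DecidableEq α] (V : Multiset (List α)) (y x z t : α) : ℤ :=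
  Rr V y x z t - Rr V x y z t

lemma d2_pairs [Fintype α] [DecidableEq α] (l m : List α) :
    d2 l m = ((Finset.univ ×ˢ Finset.univ : Finset (α × α)).filter
      (fun p => l.idxOf p.1 < l.idxOf p.2 ∧ m.idxOf p.2 < m.idxOf p.1)).card := by
  unfold d2
  refine (Finset.card_bij (fun p _ => ({p.1, p.2} : Finset α)) ?_ ?_ ?_).symm
  · rintro ⟨a, b⟩ hp
    simp only [Finset.mem_filter, Finset.mem_product] at hp
    obtain ⟨-, h1, h2⟩ := hp
    have hab : a ≠ b := by rintro rfl; exact lt_irrefl _ h1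
    simp only [Finset.mem_filter, Finset.mem_powerset]
    refine ⟨Finset.subset_univ _, ?_, ⟨a, by simp, b, by simp, h1, h2⟩⟩
    rw [Finset.card_insert_of_notMem (by simp [hab]), Finset.card_singleton]
  · rintro ⟨a, b⟩ h1 ⟨c, d⟩ h2 heq
    simp only [Finset.mem_filter, Finset.mem_product] at h1 h2
    obtain ⟨-, h1l, h1m⟩ := h1
    obtain ⟨-, h2l, h2m⟩ := h2
    have heq' : ({a, b} : Finset α) = {c, d} := heq
    have hac : a = c ∨ a = d := by
      have : a ∈ ({c, d} : Finset α) := heq' ▸ (by simp)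
      simpa using this
    rcases hac with rfl | rfl
    · have : b ∈ ({a, d} : Finset α) := heq' ▸ (by simp)
      have hb : b = a ∨ b = d := by simpa using this
      rcases hb with rfl | rfl
      · exact absurd h1l (lt_irrefl _)
      · rfl
    · have : b ∈ ({c, a} : Finset α) := heq' ▸ (by simp)
      have hb : b = c ∨ b = a := by simpa using this
      rcases hb with rfl | rfl
      · exact absurd (h1l.trans h2l) (lt_irrefl _)
      · exact absurd h1l (lt_irrefl _)
  · intro S hS
    simp only [Finset.mem_filter, Finset.mem_powerset] at hS
    obtain ⟨-, hcard, a, ha, b, hb, h1, h2⟩ := hS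
    have hab : a ≠ b := by rintro rfl; exact lt_irrefl _ h1
    refine ⟨(a, b), by simp [Finset.mem_filter, h1, h2], ?_⟩
    have hsub : ({a, b} : Finset α) ⊆ S := by
      intro t ht; simp at ht; rcases ht with rfl | rfl <;> assumption
    have : ({a, b} : Finset α).card = 2 := by
      rw [Finset.card_insert_of_notMem (by simp [hab]), Finset.card_singleton]
    show ({a, b} : Finset α) = S
    exact Finset.eq_of_subset_of_card_le hsub (by omega)

lemma d2V_eq_sum [Fintype α] [DecidableEq α] (l : List α) (V : Multiset (List α)) :
    d2V l V = ∑ p ∈ (Finset.univ ×ˢ Finset.univ : Finset (α × α)).filter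
      (fun p => l.idxOf p.1 < l.idxOf p.2), nn2 V p.2 p.1 := by
  induction V using Multiset.induction with
  | empty => simp [d2V, nn2]
  | cons v V ih =>
    have hv : d2V l (v ::ₘ V) = d2 l v + d2V l V := by simp [d2V]
    have hd2 : d2 l v = ∑ p ∈ (Finset.univ ×ˢ Finset.univ : Finset (α × α)).filter
        (fun p => l.idxOf p.1 < l.idxOf p.2),
        (if v.idxOf p.2 < v.idxOf p.1 then 1 else 0) := by
      rw [d2_pairs, ← Finset.filter_filter, Finset.card_filter]
    rw [hv, ih, hd2]
    rw [← Finset.sum_add_distrib]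
    apply Finset.sum_congr rfl
    intro p _
    simp only [nn2, Multiset.countP_cons]
    omega

lemma d2V_swap [Fintype α] [DecidableEq α] (V : Multiset (List α)) (P Q : List α) (u v : α)
    (hr : IsRanking (P ++ u :: v :: Q)) :
    (d2V (P ++ v :: u :: Q) V : ℤ) = (d2V (P ++ u :: v :: Q) V : ℤ) + del V u v := by
  obtain ⟨hnd, hmem⟩ := hr
  rw [List.nodup_append] at hnd
  obtain ⟨hP, hUV, hdisj⟩ := hnd
  have huP : u ∉ P := fun h => hdisj _ h _ (by simp) rfl
  have hvP : v ∉ P := fun h => hdisj _ h _ (by simp) rfl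
  have huv : u ≠ v := by
    simp only [List.nodup_cons, List.mem_cons] at hUV
    tauto
  set l := P ++ u :: v :: Q with hl
  set l' := P ++ v :: u :: Q with hl'
  have idx_u : l.idxOf u = P.length := by
    rw [hl, List.idxOf_append_of_notMem huP, List.idxOf_cons_self]
    omega
  have idx_v : l.idxOf v = P.length + 1 := by
    rw [hl, List.idxOf_append_of_notMem hvP, List.idxOf_cons_ne _ huv,
      List.idxOf_cons_self]
  have idx'_v : l'.idxOf v = P.length := by
    rw [hl', List.idxOf_append_of_notMem hvP, List.idxOf_cons_self]
    omega
  have idx'_u : l'.idxOf u = P.length + 1 := by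
    rw [hl', List.idxOf_append_of_notMem huP, List.idxOf_cons_ne _ (Ne.symm huv),
      List.idxOf_cons_self]
  have idx_other : ∀ a, a ≠ u → a ≠ v → l'.idxOf a = l.idxOf a := by
    intro a hau hav
    by_cases haP : a ∈ P
    · rw [hl, hl', List.idxOf_append_of_mem haP, List.idxOf_append_of_mem haP]
    · rw [hl, hl', List.idxOf_append_of_notMem haP, List.idxOf_append_of_notMem haP,
        List.idxOf_cons_ne _ (Ne.symm hau), List.idxOf_cons_ne _ (Ne.symm hav),
        List.idxOf_cons_ne _ (Ne.symm hav), List.idxOf_cons_ne _ (Ne.symm hau)]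
  have idx_ne : ∀ a, a ≠ u → a ≠ v → l.idxOf a ≠ P.length ∧ l.idxOf a ≠ P.length + 1 := by
    intro a hau hav
    constructor
    · intro h
      exact hau ((List.idxOf_inj (hmem a)).1 (h.trans idx_u.symm))
    · intro h
      exact hav ((List.idxOf_inj (hmem a)).1 (h.trans idx_v.symm))
  have key : ∀ a b : α, (l'.idxOf a < l'.idxOf b) ↔
      ((a = v ∧ b = u) ∨ (¬(a = u ∧ b = v) ∧ l.idxOf a < l.idxOf b)) := by
    intro a b
    by_cases hau : a = u
    · subst hau
      by_cases hbv : b = v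
      · subst hbv
        simp [idx'_u, idx'_v, idx_u, idx_v, huv]
      · by_cases hbu : b = a
        · subst hbu
          simp [huv]
        · have hb := idx_ne b (fun h => hbu h) hbv
          rw [idx'_u, idx_other b (fun h => hbu h) hbv]
          simp only [huv, hbv, hbu, and_false, false_and, false_or, not_false_eq_true,
            true_and, idx_u, and_true]
          omega
    · by_cases hav : a = v
      · subst hav
        by_cases hbu : b = u
        · subst hbu
          simp [idx'_v, idx'_u, idx_u, idx_v, huv, hau]
        · by_cases hbv : b = a
          · subst hbv
            simp [hau]
          · have hb := idx_ne b hbu (fun h => hbv h)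
            rw [idx'_v, idx_other b hbu (fun h => hbv h)]
            simp only [hbu, hau, and_false, false_or, false_and, not_false_eq_true, true_and,
              idx_v, and_true]
            omega
      · have ha := idx_ne a hau hav
        by_cases hbu : b = u
        · subst hbu
          rw [idx'_u, idx_other a hau hav]
          simp only [hav, hau, false_and, false_or, and_false, not_false_eq_true, true_and,
            idx_u, and_true]
          omega
        · by_cases hbv : b = v
          · subst hbv
            rw [idx'_v, idx_other a hau hav]
            simp only [hau, hbu, and_false, false_and, false_or, hav, not_false_eq_true,
              true_and, idx_v, and_true]
            omega
          · rw [idx_other a hau hav, idx_other b hbu hbv]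
            simp [hau, hav, hbu, hbv]
  have hFeq : ((Finset.univ ×ˢ Finset.univ : Finset (α × α)).filter
        (fun p => l'.idxOf p.1 < l'.idxOf p.2))
      = insert (v, u) (((Finset.univ ×ˢ Finset.univ : Finset (α × α)).filter
        (fun p => l.idxOf p.1 < l.idxOf p.2)).erase (u, v)) := by
    ext ⟨a, b⟩
    simp only [Finset.mem_filter, Finset.mem_insert, Finset.mem_erase, Finset.mem_product,
      Finset.mem_univ, true_and, and_true, Prod.mk.injEq, ne_eq]
    rw [key a b]
    try tauto
  have hmemF : (u, v) ∈ ((Finset.univ ×ˢ Finset.univ : Finset (α × α)).filter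
      (fun p => l.idxOf p.1 < l.idxOf p.2)) := by
    simp [Finset.mem_filter, idx_u, idx_v]
  have hnm : (v, u) ∉ (((Finset.univ ×ˢ Finset.univ : Finset (α × α)).filter
      (fun p => l.idxOf p.1 < l.idxOf p.2)).erase (u, v)) := by
    simp only [Finset.mem_erase, Finset.mem_filter, Finset.mem_product, Finset.mem_univ,
      true_and, and_true, idx_u, idx_v]
    omega
  have s1 : d2V l' V = nn2 V u v + ∑ p ∈ (((Finset.univ ×ˢ Finset.univ : Finset (α × α)).filter
      (fun p => l.idxOf p.1 < l.idxOf p.2)).erase (u, v)), nn2 V p.2 p.1 := by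
    rw [d2V_eq_sum, hFeq, Finset.sum_insert hnm]
  have s2 : (∑ p ∈ (((Finset.univ ×ˢ Finset.univ : Finset (α × α)).filter
      (fun p => l.idxOf p.1 < l.idxOf p.2)).erase (u, v)), nn2 V p.2 p.1) + nn2 V v u
      = d2V l V := by
    rw [d2V_eq_sum]
    exact Finset.sum_erase_add _ _ hmemF
  unfold del
  omega

lemma IsRanking.perm {l l' : List α} (h : IsRanking l) (hp : l.Perm l') : IsRanking l' :=
  ⟨hp.nodup_iff.1 h.1, fun a => hp.mem_iff.1 (h.2 a)⟩

lemma d2V_move_left [Fintype α] [DecidableEq α] (V : Multiset (List α)) (x : α) :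
    ∀ (M P Q : List α), IsRanking (P ++ M ++ x :: Q) →
    (d2V (P ++ x :: (M ++ Q)) V : ℤ)
      = (d2V (P ++ M ++ x :: Q) V : ℤ) + (M.map (fun z => del V z x)).sum := by
  intro M
  induction M with
  | nil => intro P Q h; simp
  | cons m M ih =>
    intro P Q h
    have hassoc : P ++ (m :: M) ++ x :: Q = (P ++ [m]) ++ M ++ x :: Q := by simp
    have h' : IsRanking ((P ++ [m]) ++ M ++ x :: Q) := hassoc ▸ h
    have e1 := ih (P ++ [m]) Q h'
    have hr2 : IsRanking (P ++ m :: x :: (M ++ Q)) := by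
      refine h.perm ?_
      have h1 : P ++ (m :: M) ++ x :: Q = P ++ (m :: (M ++ x :: Q)) := by simp
      rw [h1]
      exact List.Perm.append_left P (List.perm_middle.cons m)
    have e2 := d2V_swap V P (M ++ Q) m x hr2
    have l1 : (P ++ [m]) ++ x :: (M ++ Q) = P ++ m :: x :: (M ++ Q) := by simp
    have l2 : P ++ x :: ((m :: M) ++ Q) = P ++ x :: m :: (M ++ Q) := by simp
    rw [l1] at e1
    rw [l2, e2, e1, ← hassoc]
    simp only [List.map_cons, List.sum_cons]
    ring

lemma d2V_move_right [Fintype α] [DecidableEq α] (V : Multiset (List α)) (y : α) :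
    ∀ (M P Q : List α), IsRanking (P ++ y :: (M ++ Q)) →
    (d2V (P ++ M ++ y :: Q) V : ℤ)
      = (d2V (P ++ y :: (M ++ Q)) V : ℤ) + (M.map (fun z => del V y z)).sum := by
  intro M
  induction M with
  | nil => intro P Q h; simp
  | cons m M ih =>
    intro P Q h
    have hl : P ++ y :: ((m :: M) ++ Q) = P ++ y :: m :: (M ++ Q) := by simp
    have h0 : IsRanking (P ++ y :: m :: (M ++ Q)) := hl ▸ h
    have e2 := d2V_swap V P (M ++ Q) y m h0
    -- e2 : d2V (P ++ m :: y :: (M ++ Q)) = d2V (P ++ y :: m :: (M ++ Q)) + del V y m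
    have h1 : IsRanking ((P ++ [m]) ++ y :: (M ++ Q)) := by
      refine h0.perm ?_
      have : (P ++ [m]) ++ y :: (M ++ Q) = P ++ m :: y :: (M ++ Q) := by simp
      rw [this]
      exact List.Perm.append_left P (List.Perm.swap m y (M ++ Q))
    have e1 := ih (P ++ [m]) Q h1
    have l1 : (P ++ [m]) ++ M ++ y :: Q = P ++ (m :: M) ++ y :: Q := by simp
    have l2 : (P ++ [m]) ++ y :: (M ++ Q) = P ++ m :: y :: (M ++ Q) := by simp
    rw [l1, l2] at e1
    rw [e1, e2, hl]
    simp only [List.map_cons, List.sum_cons]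
    ring

lemma mem_split {l : List α} {a : α} (h : a ∈ l) : ∃ s t, l = s ++ a :: t :=
  List.append_of_mem h

lemma indexOf_lt_of_append_left [DecidableEq α] {s t : List α} {a b : α}
    (hnd : (s ++ b :: t).Nodup) (ha : a ∈ s) :
    (s ++ b :: t).idxOf a < (s ++ b :: t).idxOf b := by
  rw [List.nodup_append] at hnd
  have hbs : b ∉ s := fun hb => hnd.2.2 _ hb _ (by simp) rfl
  rw [List.idxOf_append_of_mem ha, List.idxOf_append_of_notMem hbs,
    List.idxOf_cons_self]
  have := List.idxOf_lt_length_iff.2 ha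
  omega

lemma sum_map_add (B : List α) (f g : α → ℤ) :
    (B.map (fun z => f z + g z)).sum = (B.map f).sum + (B.map g).sum := by
  induction B with
  | nil => simp
  | cons b B ih => simp only [List.map_cons, List.sum_cons, ih]; ring

theorem stmt18 [Fintype α] [DecidableEq α]
    (V : Multiset (List α)) (hV : ∀ v ∈ V, IsRanking v)
    (U : Finset (α × α))
    (hU : ∀ p ∈ U, p.1 ≠ p.2 ∧
      ∀ π : List α, IsMedian2 V π → π.idxOf p.1 < π.idxOf p.2)
    (x y : α) (hxy : x ≠ y)
    (hsum : 2 * del V x y >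
      ∑ z ∈ (Finset.univ : Finset α) \
        ((Finset.univ.filter fun w => (w, x) ∈ U ∧ (w, y) ∈ U) ∪
          (Finset.univ.filter fun w => (x, w) ∈ U ∧ (y, w) ∈ U) ∪ {x, y}),
        max 0 (del V y z + del V z x)) :
    ∀ π : List α, IsMedian2 V π → π.idxOf x < π.idxOf y := by
  intro π hπ
  by_contra hlt
  obtain ⟨⟨hnd, hmem⟩, hmin⟩ := hπ
  have hrank : IsRanking π := ⟨hnd, hmem⟩
  have hπ' : IsMedian2 V π := ⟨hrank, hmin⟩
  have hne : π.idxOf x ≠ π.idxOf y := fun h => hxy ((List.idxOf_inj (hmem x)).1 h)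
  have hyx : π.idxOf y < π.idxOf x := by omega
  obtain ⟨A, T, hAT⟩ := List.append_of_mem (hmem y)
  have hxT : x ∈ T := by
    have hx := hmem x
    rw [hAT] at hx
    rcases List.mem_append.1 hx with h | h
    · exfalso
      have h2 := indexOf_lt_of_append_left (hAT ▸ hnd) h
      rw [← hAT] at h2
      omega
    · rcases List.mem_cons.1 h with h | h
      · exact absurd h hxy
      · exact h
  obtain ⟨B, C, hBC⟩ := List.append_of_mem hxT
  have hπeq : π = A ++ y :: (B ++ x :: C) := by rw [hAT, hBC]
  -- nodup facts
  have hnd2 : (A ++ y :: (B ++ x :: C)).Nodup := by rw [← hπeq]; exact hnd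
  rw [List.nodup_append] at hnd2
  obtain ⟨hA, hcons, hdisj⟩ := hnd2
  rw [List.nodup_cons] at hcons
  obtain ⟨hyBxC, hBxC⟩ := hcons
  rw [List.nodup_append] at hBxC
  obtain ⟨hB, hxC, hdisj2⟩ := hBxC
  have hyA : y ∉ A := fun h => hdisj _ h _ (by simp) rfl
  have hxA : x ∉ A := fun h => hdisj _ h _ (by simp) rfl
  have hyB : y ∉ B := fun h => hyBxC (by simp [h])
  have hxB : x ∉ B := fun h => hdisj2 _ h _ (by simp) rfl
  -- index computations
  have idx_y : π.idxOf y = A.length := by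
    rw [hπeq, List.idxOf_append_of_notMem hyA, List.idxOf_cons_self]
    omega
  have idx_x : π.idxOf x = A.length + 1 + B.length := by
    rw [hπeq, List.idxOf_append_of_notMem hxA, List.idxOf_cons_ne _ (Ne.symm hxy),
      List.idxOf_append_of_notMem hxB, List.idxOf_cons_self]
    omega
  have idx_z : ∀ z ∈ B, π.idxOf y < π.idxOf z ∧ π.idxOf z < π.idxOf x := by
    intro z hz
    have hzA : z ∉ A := fun h => hdisj _ h _ (by simp [hz]) rfl
    have hzy : z ≠ y := fun h => hyB (h ▸ hz)
    have hidz : π.idxOf z = A.length + 1 + B.idxOf z := by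
      rw [hπeq, List.idxOf_append_of_notMem hzA, List.idxOf_cons_ne _ (Ne.symm hzy),
        List.idxOf_append_of_mem hz]
      omega
    have := List.idxOf_lt_length_iff.2 hz
    omega
  -- list equalities
  have hE1 : A ++ (y :: B) ++ x :: C = π := by rw [hπeq]; simp
  have hE2 : A ++ y :: ((B ++ [x]) ++ C) = π := by rw [hπeq]; simp
  -- moves
  have hMove1 := d2V_move_left V x (y :: B) A C (hE1 ▸ hrank)
  have hMove2 := d2V_move_right V y (B ++ [x]) A C (hE2 ▸ hrank)
  rw [hE1] at hMove1
  rw [hE2] at hMove2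
  -- the moved lists are rankings
  have hr1 : IsRanking (A ++ x :: ((y :: B) ++ C)) := by
    refine hrank.perm ?_
    have h1 : π = A ++ ((y :: B) ++ x :: C) := by rw [hπeq]; simp
    rw [h1]
    exact List.Perm.append_left A List.perm_middle
  have hr2 : IsRanking (A ++ (B ++ [x]) ++ y :: C) := by
    refine hrank.perm ?_
    have h1 : A ++ (B ++ [x]) ++ y :: C = A ++ (B ++ x :: y :: C) := by simp
    rw [h1, hπeq]
    exact List.Perm.append_left A
      ((List.perm_middle.symm).trans (List.Perm.append_left B (List.Perm.swap x y C)))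
  have hm1 : d2V π V ≤ d2V (A ++ x :: ((y :: B) ++ C)) V := hmin _ hr1
  have hm2 : d2V π V ≤ d2V (A ++ (B ++ [x]) ++ y :: C) V := hmin _ hr2
  have hm1' : (d2V π V : ℤ) ≤ d2V (A ++ x :: ((y :: B) ++ C)) V := by exact_mod_cast hm1
  have hm2' : (d2V π V : ℤ) ≤ d2V (A ++ (B ++ [x]) ++ y :: C) V := by exact_mod_cast hm2
  have ineq1 : 0 ≤ del V y x + (B.map (fun z => del V z x)).sum := by
    rw [hMove1] at hm1'
    simp only [List.map_cons, List.sum_cons] at hm1'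
    linarith
  have ineq2 : 0 ≤ (B.map (fun z => del V y z)).sum + del V y x := by
    rw [hMove2] at hm2'
    simp only [List.map_append, List.sum_append, List.map_cons, List.map_nil,
      List.sum_cons, List.sum_nil] at hm2'
    linarith
  have hdelsym : del V x y = - del V y x := by unfold del; ring
  have hsplit : (B.map (fun z => del V y z + del V z x)).sum
      = (B.map (fun z => del V y z)).sum + (B.map (fun z => del V z x)).sum :=
    sum_map_add B _ _
  have hkey : 2 * del V x y ≤ (B.map (fun z => del V y z + del V z x)).sum := by
    rw [hsplit, hdelsym]
    linarith
  have hBsum : (B.map (fun z => del V y z + del V z x)).sum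
      = ∑ z ∈ B.toFinset, (del V y z + del V z x) :=
    (List.sum_toFinset _ hB).symm
  set Z' := (Finset.univ : Finset α) \
        ((Finset.univ.filter fun w => (w, x) ∈ U ∧ (w, y) ∈ U) ∪
          (Finset.univ.filter fun w => (x, w) ∈ U ∧ (y, w) ∈ U) ∪ {x, y}) with hZ'
  have hsub : B.toFinset ⊆ Z' := by
    intro z hz
    rw [List.mem_toFinset] at hz
    obtain ⟨hzy, hzx⟩ := idx_z z hz
    rw [hZ']
    simp only [Finset.mem_sdiff, Finset.mem_univ, true_and, Finset.mem_union,
      Finset.mem_filter, Finset.mem_insert, Finset.mem_singleton]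
    rintro ((⟨h1, h2⟩ | ⟨h1, h2⟩) | (rfl | rfl))
    · have h3 : π.idxOf z < π.idxOf y := (hU _ h2).2 π hπ'
      omega
    · have h3 : π.idxOf x < π.idxOf z := (hU _ h1).2 π hπ'
      omega
    · omega
    · omega
  have hle1 : ∑ z ∈ B.toFinset, (del V y z + del V z x)
      ≤ ∑ z ∈ B.toFinset, max 0 (del V y z + del V z x) :=
    Finset.sum_le_sum (fun i _ => le_max_right _ _)
  have hle2 : ∑ z ∈ B.toFinset, max 0 (del V y z + del V z x)
      ≤ ∑ z ∈ Z', max 0 (del V y z + del V z x) :=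
    Finset.sum_le_sum_of_subset_of_nonneg hsub (fun i _ _ => le_max_left _ _)
  rw [hBsum] at hkey
  linarith
end

section
/- (3-wise Major Order Theorem with equality) Let x, y be two alternatives of an election with voting profile V over a finite set C of alternatives. Suppose that δ_{xy} ≥ 0, that Q_{x,y,z} ≥ 0 for all z ∈ C ∖ {x,y}, and that 2δ_{xy} ≥ Σ_{z ∈ C∖{x,y}} max(0, −P_{x,y,z} + Σ_{t ∈ C∖{x,y,z}} max(0, S_{y,x,z,t})). Then there exists a 3-wise median of the election in which x is ranked before y. -/
open Finset

variable {α : Type}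

section Infra

variable [DecidableEq α]

/-- `a` is (weakly) first among `S` in the list `l`. -/
def mins (l : List α) (S : Finset α) (a : α) : Prop :=
  ∀ c ∈ S, l.idxOf a ≤ l.idxOf c

instance (l : List α) (S : Finset α) (a : α) : Decidable (mins l S a) := by
  unfold mins; infer_instance

/-- The condition in the definition of `d3`. -/
def cnd (l m : List α) (S : Finset α) : Prop :=
  S.card ≤ 3 ∧ ∃ a ∈ S, ∃ b ∈ S, a ≠ b ∧ mins l S a ∧ mins m S b

instance (l m : List α) (S : Finset α) : Decidable (cnd l m S) := by
  unfold cnd; infer_instance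

lemma idx_inj {l : List α} (hl : IsRanking l) {a b : α}
    (h : l.idxOf a = l.idxOf b) : a = b :=
  (List.idxOf_inj (hl.2 a)).1 h

lemma idx_ne {l : List α} (hl : IsRanking l) {a b : α} (hab : a ≠ b) :
    l.idxOf a ≠ l.idxOf b := fun h => hab (idx_inj hl h)

lemma mins_unique {l : List α} (hl : IsRanking l) {S : Finset α} {a b : α}
    (ha : a ∈ S) (hb : b ∈ S) (hma : mins l S a) (hmb : mins l S b) : a = b :=
  idx_inj hl (le_antisymm (hma b hb) (hmb a ha))

lemma mins_exists {l : List α} {S : Finset α} (hS : S.Nonempty) :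
    ∃ a ∈ S, mins l S a := by
  obtain ⟨a, ha, hmin⟩ := S.exists_min_image (fun c => l.idxOf c) hS
  exact ⟨a, ha, hmin⟩

/-- The `d3` condition expressed through a known top of `l` on `S`. -/
lemma cnd_iff_of_mins {l m : List α} (hl : IsRanking l) (hm : IsRanking m)
    {S : Finset α} {w : α} (hw : w ∈ S) (hmw : mins l S w) :
    cnd l m S ↔ (S.card ≤ 3 ∧ ¬ mins m S w) := by
  constructor
  · rintro ⟨hc, a, ha, b, hb, hab, hma, hmb⟩
    refine ⟨hc, fun hmw' => ?_⟩
    have : a = w := mins_unique hl ha hw hma hmw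
    have : b = w := mins_unique hm hb hw hmb hmw'
    exact hab (by subst_vars; rfl)
  · rintro ⟨hc, hnw⟩
    obtain ⟨b, hb, hmb⟩ := mins_exists (l := m) ⟨w, hw⟩
    refine ⟨hc, w, hw, b, hb, ?_, hmw, hmb⟩
    rintro rfl; exact hnw hmb

/-- Transfer of the condition between two lists inducing the same minimizers. -/
lemma cnd_congr {l l' m : List α} {S : Finset α}
    (h : ∀ a ∈ S, (mins l S a ↔ mins l' S a)) :
    cnd l m S ↔ cnd l' m S := by
  unfold cnd
  constructor
  · rintro ⟨hc, a, ha, b, hb, hab, hma, hmb⟩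
    exact ⟨hc, a, ha, b, hb, hab, (h a ha).1 hma, hmb⟩
  · rintro ⟨hc, a, ha, b, hb, hab, hma, hmb⟩
    exact ⟨hc, a, ha, b, hb, hab, (h a ha).2 hma, hmb⟩

lemma mins_congr_of_ordIso {l l' : List α} {S : Finset α}
    (h : ∀ a ∈ S, ∀ b ∈ S, (l.idxOf a ≤ l.idxOf b ↔ l'.idxOf a ≤ l'.idxOf b)) :
    ∀ a ∈ S, (mins l S a ↔ mins l' S a) := by
  intro a ha
  exact ⟨fun hm c hc => (h a ha c hc).1 (hm c hc), fun hm c hc => (h a ha c hc).2 (hm c hc)⟩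

/-- relative order of elements distinct from `x` is preserved under erasing `x`. -/
lemma idx_erase_le_iff {l : List α} (hnd : l.Nodup) {x a b : α}
    (hx : x ∈ l) (ha : a ∈ l) (hb : b ∈ l) (hax : a ≠ x) (hbx : b ≠ x) :
    ((l.erase x).idxOf a ≤ (l.erase x).idxOf b ↔ l.idxOf a ≤ l.idxOf b) := by
  obtain ⟨u, w, rfl⟩ := List.append_of_mem hx
  have hxu : x ∉ u := by
    intro hxu
    exact (List.disjoint_of_nodup_append hnd) hxu (by simp)
  have herase : (u ++ x :: w).erase x = u ++ w := by
    rw [List.erase_append_right _ hxu, List.erase_cons_head]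
  rw [herase]
  have hmem : ∀ c : α, c ∈ u ++ x :: w → c ≠ x → c ∈ u ∨ c ∈ w := by
    intro c hc hcx
    rcases List.mem_append.1 hc with h | h
    · exact Or.inl h
    · rcases List.mem_cons.1 h with h | h
      · exact absurd h hcx
      · exact Or.inr h
  have idx1 : ∀ c ∈ u, (u ++ x :: w).idxOf c = u.idxOf c ∧
      (u ++ w).idxOf c = u.idxOf c := by
    intro c hc
    exact ⟨List.idxOf_append_of_mem hc, List.idxOf_append_of_mem hc⟩
  have idx2 : ∀ c ∈ w, c ≠ x → (u ++ x :: w).idxOf c = u.length + 1 + w.idxOf c ∧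
      (u ++ w).idxOf c = u.length + w.idxOf c := by
    intro c hc hcx
    have hcu : c ∉ u := by
      intro hcu
      exact (List.disjoint_of_nodup_append hnd) hcu (by simp [hc])
    constructor
    · rw [List.idxOf_append_of_notMem hcu, List.idxOf_cons_ne _ (fun h => hcx h.symm)]
      omega
    · rw [List.idxOf_append_of_notMem hcu]
  have hlt : ∀ c ∈ u, u.idxOf c < u.length := fun c hc => List.idxOf_lt_length_iff.2 hc
  rcases hmem a ha hax with hau | haw <;> rcases hmem b hb hbx with hbu | hbw
  · rw [(idx1 a hau).1, (idx1 a hau).2, (idx1 b hbu).1, (idx1 b hbu).2]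
  · have h1 := idx1 a hau; have h2 := idx2 b hbw hbx
    have := hlt a hau
    rw [h1.1, h1.2, h2.1, h2.2]; omega
  · have h1 := idx2 a haw hax; have h2 := idx1 b hbu
    have := hlt b hbu
    rw [h1.1, h1.2, h2.1, h2.2]; omega
  · have h1 := idx2 a haw hax; have h2 := idx2 b hbw hbx
    rw [h1.1, h1.2, h2.1, h2.2]; omega

end Infra
section Sums

set_option linter.unusedSectionVars false
variable [DecidableEq α]

lemma d3_eq_sum [Fintype α] (l m : List α) :
    d3 l m = ∑ S ∈ (Finset.univ : Finset α).powerset, if cnd l m S then 1 else 0 := by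
  rw [d3]
  rw [Finset.card_filter]
  apply Finset.sum_congr rfl
  intro S _
  congr 1

lemma msum_map_ite (V : Multiset (List α)) (p : List α → Prop) [DecidablePred p] :
    (V.map (fun v => if p v then (1 : ℤ) else 0)).sum = (V.countP p : ℤ) := by
  induction V using Multiset.induction_on with
  | empty => simp
  | cons a s ih =>
    simp only [Multiset.map_cons, Multiset.sum_cons, Multiset.countP_cons, ih]
    split_ifs <;> push_cast <;> ring

lemma msum_map_add (V : Multiset (List α)) (f g : List α → ℤ) :
    (V.map (fun v => f v + g v)).sum = (V.map f).sum + (V.map g).sum := by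
  induction V using Multiset.induction_on with
  | empty => simp
  | cons a s ih => simp only [Multiset.map_cons, Multiset.sum_cons, ih]; ring

lemma msum_map_sub (V : Multiset (List α)) (f g : List α → ℤ) :
    (V.map (fun v => f v - g v)).sum = (V.map f).sum - (V.map g).sum := by
  induction V using Multiset.induction_on with
  | empty => simp
  | cons a s ih => simp only [Multiset.map_cons, Multiset.sum_cons, ih]; ring

lemma msum_map_finsum {β : Type} (V : Multiset (List α)) (s : Finset β) (f : β → List α → ℤ) :
    (V.map (fun v => ∑ z ∈ s, f z v)).sum = ∑ z ∈ s, (V.map (f z)).sum := by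
  induction V using Multiset.induction_on with
  | empty => simp
  | cons a t ih =>
    simp only [Multiset.map_cons, Multiset.sum_cons, ih, Finset.sum_add_distrib]

lemma msum_map_congr (V : Multiset (List α)) (f g : List α → ℤ)
    (h : ∀ v ∈ V, f v = g v) : (V.map f).sum = (V.map g).sum := by
  induction V using Multiset.induction_on with
  | empty => simp
  | cons a t ih =>
    simp only [Multiset.map_cons, Multiset.sum_cons]
    rw [h a (Multiset.mem_cons_self a t), ih (fun v hv => h v (Multiset.mem_cons_of_mem hv))]

lemma countP_congr' (V : Multiset (List α)) (p q : List α → Prop)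
    [DecidablePred p] [DecidablePred q] (h : ∀ v ∈ V, p v ↔ q v) :
    V.countP p = V.countP q :=
  Multiset.countP_congr rfl (fun v hv => by
    have := h v hv; simp only [eq_iff_iff]; exact this)

lemma countP_split (V : Multiset (List α)) (p q r : List α → Prop)
    [DecidablePred p] [DecidablePred q] [DecidablePred r]
    (h : ∀ v ∈ V, p v ↔ (q v ∨ r v)) (hd : ∀ v ∈ V, ¬ (q v ∧ r v)) :
    V.countP p = V.countP q + V.countP r := by
  induction V using Multiset.induction_on with
  | empty => simp
  | cons a t ih =>
    have ha := h a (Multiset.mem_cons_self a t)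
    have hda := hd a (Multiset.mem_cons_self a t)
    simp only [Multiset.countP_cons]
    rw [ih (fun v hv => h v (Multiset.mem_cons_of_mem hv))
        (fun v hv => hd v (Multiset.mem_cons_of_mem hv))]
    split_ifs <;> first | omega | tauto

/-- `d3V` as an integer-valued multiset sum. -/
lemma d3V_eq [Fintype α] (l : List α) (V : Multiset (List α)) :
    (d3V l V : ℤ) = (V.map (fun v => (d3 l v : ℤ))).sum := by
  rw [d3V]
  induction V using Multiset.induction_on with
  | empty => simp
  | cons a t ih => simp [ih]

end Sums
section Counts

set_option linter.unusedSectionVars false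
variable [DecidableEq α]

/-- Number of votes in which `a` is ranked before both `b` and `c`. -/
def tc (V : Multiset (List α)) (a b c : α) : ℕ :=
  V.countP (fun v => v.idxOf a < v.idxOf b ∧ v.idxOf a < v.idxOf c)

variable {V : Multiset (List α)} (hV : ∀ v ∈ V, IsRanking v)
include hV

lemma tc_split {a b c : α} (hbc : b ≠ c) :
    tc V a b c = nn3 V a b c + nn3 V a c b := by
  refine countP_split V _ _ _ (fun v hv => ?_) (fun v hv => ?_)
  · have h1 := idx_ne (hV v hv) hbc
    constructor
    · rintro ⟨h2, h3⟩; omega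
    · rintro (⟨h2, h3⟩ | ⟨h2, h3⟩) <;> omega
  · have h1 := idx_ne (hV v hv) hbc
    rintro ⟨⟨h2, h3⟩, ⟨h4, h5⟩⟩; omega

lemma nn2_split {a b c : α} (hac : a ≠ c) (hbc : b ≠ c) :
    nn2 V a b = nn3 V a b c + nn3 V a c b + nn3 V c a b := by
  have step1 : nn2 V a b = nn3 V a b c +
      V.countP (fun v => v.idxOf a < v.idxOf b ∧ v.idxOf c < v.idxOf b) := by
    refine countP_split V _ _ _ (fun v hv => ?_) (fun v hv => ?_)
    · have h1 := idx_ne (hV v hv) hbc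
      constructor
      · intro h2; omega
      · rintro (⟨h2, h3⟩ | ⟨h2, h3⟩) <;> omega
    · rintro ⟨⟨h2, h3⟩, ⟨h4, h5⟩⟩; omega
  have step2 : V.countP (fun v => v.idxOf a < v.idxOf b ∧ v.idxOf c < v.idxOf b)
      = nn3 V a c b + nn3 V c a b := by
    refine countP_split V _ _ _ (fun v hv => ?_) (fun v hv => ?_)
    · have h1 := idx_ne (hV v hv) hac
      constructor
      · rintro ⟨h2, h3⟩; omega
      · rintro (⟨h2, h3⟩ | ⟨h2, h3⟩) <;> omega
    · have h1 := idx_ne (hV v hv) hac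
      rintro ⟨⟨h2, h3⟩, ⟨h4, h5⟩⟩; omega
  omega

lemma nn3_split {a b c d : α} (hda : d ≠ a) (hdb : d ≠ b) (hdc : d ≠ c) :
    nn3 V a b c = nn4 V d a b c + nn4 V a d b c + nn4 V a b d c + nn4 V a b c d := by
  have step1 : nn3 V a b c =
      V.countP (fun v => v.idxOf a < v.idxOf b ∧ v.idxOf b < v.idxOf c ∧
        v.idxOf d < v.idxOf b) +
      V.countP (fun v => v.idxOf a < v.idxOf b ∧ v.idxOf b < v.idxOf c ∧
        v.idxOf b < v.idxOf d) := by
    refine countP_split V _ _ _ (fun v hv => ?_) (fun v hv => ?_)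
    · have h1 := idx_ne (hV v hv) hdb
      constructor
      · rintro ⟨h2, h3⟩; omega
      · rintro (⟨h2, h3, h4⟩ | ⟨h2, h3, h4⟩) <;> omega
    · rintro ⟨⟨h2, h3, h4⟩, ⟨h5, h6, h7⟩⟩; omega
  have step2 : V.countP (fun v => v.idxOf a < v.idxOf b ∧ v.idxOf b < v.idxOf c ∧
        v.idxOf d < v.idxOf b) = nn4 V d a b c + nn4 V a d b c := by
    refine countP_split V _ _ _ (fun v hv => ?_) (fun v hv => ?_)
    · have h1 := idx_ne (hV v hv) hda
      constructor
      · rintro ⟨h2, h3, h4⟩; omega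
      · rintro (⟨h2, h3, h4⟩ | ⟨h2, h3, h4⟩) <;> omega
    · have h1 := idx_ne (hV v hv) hda
      rintro ⟨⟨h2, h3, h4⟩, ⟨h5, h6, h7⟩⟩; omega
  have step3 : V.countP (fun v => v.idxOf a < v.idxOf b ∧ v.idxOf b < v.idxOf c ∧
        v.idxOf b < v.idxOf d) = nn4 V a b d c + nn4 V a b c d := by
    refine countP_split V _ _ _ (fun v hv => ?_) (fun v hv => ?_)
    · have h1 := idx_ne (hV v hv) hdc
      constructor
      · rintro ⟨h2, h3, h4⟩; omega
      · rintro (⟨h2, h3, h4⟩ | ⟨h2, h3, h4⟩) <;> omega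
    · have h1 := idx_ne (hV v hv) hdc
      rintro ⟨⟨h2, h3, h4⟩, ⟨h5, h6, h7⟩⟩; omega
  omega

lemma Qq_eq {x y z : α} (hxy : x ≠ y) (hxz : x ≠ z) (hyz : y ≠ z) :
    (tc V x y z : ℤ) - tc V y x z = Qq V x y z := by
  rw [tc_split hV hyz, tc_split hV hxz, Qq]
  push_cast; ring

lemma Pq_eq {x y z : α} (hxy : x ≠ y) (hxz : x ≠ z) (hyz : y ≠ z) :
    ((nn2 V x z : ℤ) - nn2 V z x) + ((nn2 V z y : ℤ) - nn2 V y z)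
      + ((tc V x y z : ℤ) - tc V y x z) + ((tc V z x y : ℤ) - tc V y x z)
      = Pq V x y z := by
  rw [tc_split hV hyz, tc_split hV hxz, tc_split hV hxy,
    nn2_split hV (a := x) (b := z) (c := y) hxy hyz.symm,
    nn2_split hV (a := z) (b := x) (c := y) hyz.symm hxy,
    nn2_split hV (a := z) (b := y) (c := x) hxz.symm hxy.symm,
    nn2_split hV (a := y) (b := z) (c := x) hxy.symm hxz.symm, Pq]
  push_cast; ring

lemma Ss_eq {x y z t : α} (hxy : x ≠ y) (hxz : x ≠ z) (hxt : x ≠ t)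
    (hyz : y ≠ z) (hyt : y ≠ t) (hzt : z ≠ t) :
    ((tc V x z t : ℤ) - tc V z x t) + ((tc V z y t : ℤ) - tc V y z t)
      = - Ss V y x z t := by
  rw [tc_split hV hzt, tc_split hV hxt, tc_split hV hyt, tc_split hV hzt,
    nn3_split hV (a := x) (b := z) (c := t) hxy.symm hyz hyt,
    nn3_split hV (a := x) (b := t) (c := z) hxy.symm hyt hyz,
    nn3_split hV (a := z) (b := x) (c := t) hyz hxy.symm hyt,
    nn3_split hV (a := z) (b := t) (c := x) hyz hyt hxy.symm,
    nn3_split hV (a := z) (b := y) (c := t) hxz hxy hxt,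
    nn3_split hV (a := z) (b := t) (c := y) hxz hxt hxy,
    nn3_split hV (a := y) (b := z) (c := t) hxy hxz hxt,
    nn3_split hV (a := y) (b := t) (c := z) hxy hxt hxz,
    Ss, Rr, Rr]
  push_cast; ring

end Counts
section Move

set_option linter.unusedSectionVars false
variable [DecidableEq α] {x y : α} {A B C : List α}

lemma ndfacts (h : (A ++ (y :: (B ++ x :: C))).Nodup) :
    x ∉ A ∧ x ∉ B ∧ x ∉ C ∧ y ∉ A ∧ y ∉ B ∧ y ∉ C ∧ x ≠ y ∧
    (∀ a ∈ A, a ∉ B ∧ a ∉ C ∧ a ≠ x ∧ a ≠ y) ∧ (∀ b ∈ B, b ∉ C ∧ b ≠ x ∧ b ≠ y) ∧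
    (∀ c ∈ C, c ≠ x ∧ c ≠ y) ∧ A.Nodup ∧ B.Nodup ∧ C.Nodup := by
  simp only [List.nodup_append, List.nodup_cons, List.mem_append, List.mem_cons,
    List.disjoint_left] at h
  obtain ⟨hA, ⟨hy, hB, ⟨hxC, hC⟩, hBd⟩, hdisj⟩ := h
  refine ⟨fun h => hdisj x h x (by tauto) rfl, fun h => hBd x h x (by tauto) rfl, hxC,
    fun h => hdisj y h y (by tauto) rfl, fun h => hy (by tauto), fun h => hy (by tauto),
    fun h => hy (by tauto),
    fun a ha => ⟨fun h => hdisj a ha a (by tauto) rfl, fun h => hdisj a ha a (by tauto) rfl,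
      fun h => hdisj a ha a (by tauto) rfl, fun h => hdisj a ha a (by tauto) rfl⟩,
    fun b hb => ⟨fun h => hBd b hb b (by tauto) rfl, fun h => hBd b hb b (by tauto) rfl,
      fun h => hy (Or.inl (h ▸ hb))⟩,
    fun c hc => ⟨fun h => hxC (h ▸ hc), fun h => hy (Or.inr (Or.inr (h ▸ hc)))⟩,
    hA, hB, hC⟩

lemma perm1 : (A ++ (x :: y :: (B ++ C))).Perm (A ++ (y :: (B ++ x :: C))) := by
  refine (List.Perm.append_left A ?_)
  have : (y :: (B ++ x :: C)) = (y :: B) ++ x :: C := by simp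
  rw [this]
  have := (List.perm_middle (a := x) (l₁ := y :: B) (l₂ := C)).symm
  refine List.Perm.trans ?_ this
  simp

lemma perm2 : (A ++ (B ++ x :: y :: C)).Perm (A ++ (y :: (B ++ x :: C))) := by
  refine (List.Perm.append_left A ?_)
  have h1 : B ++ x :: y :: C = (B ++ [x]) ++ y :: C := by simp
  have h2 : y :: (B ++ x :: C) = y :: ((B ++ [x]) ++ C) := by simp
  rw [h1, h2]
  exact List.perm_middle

lemma ranking1 (h : IsRanking (A ++ (y :: (B ++ x :: C)))) :
    IsRanking (A ++ (x :: y :: (B ++ C))) :=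
  ⟨perm1.nodup_iff.2 h.1, fun a => perm1.mem_iff.2 (h.2 a)⟩

lemma ranking2 (h : IsRanking (A ++ (y :: (B ++ x :: C)))) :
    IsRanking (A ++ (B ++ x :: y :: C)) :=
  ⟨perm2.nodup_iff.2 h.1, fun a => perm2.mem_iff.2 (h.2 a)⟩

end Move
section Pos

set_option linter.unusedSectionVars false
variable [DecidableEq α] {x y : α} {A B C : List α}

lemma pos0 (h : (A ++ (y :: (B ++ x :: C))).Nodup) :
    (∀ a ∈ A, (A ++ (y :: (B ++ x :: C))).idxOf a = A.idxOf a) ∧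
    (A ++ (y :: (B ++ x :: C))).idxOf y = A.length ∧
    (∀ z ∈ B, (A ++ (y :: (B ++ x :: C))).idxOf z = A.length + 1 + B.idxOf z) ∧
    (A ++ (y :: (B ++ x :: C))).idxOf x = A.length + 1 + B.length ∧
    (∀ c ∈ C, (A ++ (y :: (B ++ x :: C))).idxOf c
      = A.length + 1 + B.length + 1 + C.idxOf c) := by
  obtain ⟨hxA, hxB, hxC, hyA, hyB, hyC, hxy, hAf, hBf, hCf, -, -, -⟩ := ndfacts h
  refine ⟨fun a ha => List.idxOf_append_of_mem ha, ?_, fun z hz => ?_, ?_, fun c hc => ?_⟩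
  · rw [List.idxOf_append_of_notMem hyA, List.idxOf_cons_self]
    omega
  · rw [List.idxOf_append_of_notMem (fun h' => (hAf z h' |>.1) hz),
      List.idxOf_cons_ne _ (fun h' => hyB (by rw [h']; exact hz)),
      List.idxOf_append_of_mem hz]
    omega
  · rw [List.idxOf_append_of_notMem hxA,
      List.idxOf_cons_ne _ hxy.symm,
      List.idxOf_append_of_notMem hxB, List.idxOf_cons_self]
    omega
  · rw [List.idxOf_append_of_notMem (fun h' => (hAf c h' |>.2.1) hc),
      List.idxOf_cons_ne _ (fun h' => hyC (by rw [h']; exact hc)),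
      List.idxOf_append_of_notMem (fun h' => (hBf c h' |>.1) hc),
      List.idxOf_cons_ne _ (fun h' => hxC (by rw [h']; exact hc))]
    omega

lemma pos1 (h : (A ++ (y :: (B ++ x :: C))).Nodup) :
    (∀ a ∈ A, (A ++ (x :: y :: (B ++ C))).idxOf a = A.idxOf a) ∧
    (A ++ (x :: y :: (B ++ C))).idxOf x = A.length ∧
    (A ++ (x :: y :: (B ++ C))).idxOf y = A.length + 1 ∧
    (∀ z ∈ B, (A ++ (x :: y :: (B ++ C))).idxOf z = A.length + 2 + B.idxOf z) ∧
    (∀ c ∈ C, (A ++ (x :: y :: (B ++ C))).idxOf c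
      = A.length + 2 + B.length + C.idxOf c) := by
  obtain ⟨hxA, hxB, hxC, hyA, hyB, hyC, hxy, hAf, hBf, hCf, -, -, -⟩ := ndfacts h
  refine ⟨fun a ha => List.idxOf_append_of_mem ha, ?_, ?_, fun z hz => ?_, fun c hc => ?_⟩
  · rw [List.idxOf_append_of_notMem hxA, List.idxOf_cons_self]
    omega
  · rw [List.idxOf_append_of_notMem hyA, List.idxOf_cons_ne _ hxy,
      List.idxOf_cons_self]
  · rw [List.idxOf_append_of_notMem (fun h' => (hAf z h' |>.1) hz),
      List.idxOf_cons_ne _ (fun h' => hxB (by rw [h']; exact hz)),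
      List.idxOf_cons_ne _ (fun h' => hyB (by rw [h']; exact hz)),
      List.idxOf_append_of_mem hz]
    omega
  · rw [List.idxOf_append_of_notMem (fun h' => (hAf c h' |>.2.1) hc),
      List.idxOf_cons_ne _ (fun h' => hxC (by rw [h']; exact hc)),
      List.idxOf_cons_ne _ (fun h' => hyC (by rw [h']; exact hc)),
      List.idxOf_append_of_notMem (fun h' => (hBf c h' |>.1) hc)]
    omega

lemma pos2 (h : (A ++ (y :: (B ++ x :: C))).Nodup) :
    (∀ a ∈ A, (A ++ (B ++ x :: y :: C)).idxOf a = A.idxOf a) ∧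
    (∀ z ∈ B, (A ++ (B ++ x :: y :: C)).idxOf z = A.length + B.idxOf z) ∧
    (A ++ (B ++ x :: y :: C)).idxOf x = A.length + B.length ∧
    (A ++ (B ++ x :: y :: C)).idxOf y = A.length + B.length + 1 ∧
    (∀ c ∈ C, (A ++ (B ++ x :: y :: C)).idxOf c
      = A.length + B.length + 2 + C.idxOf c) := by
  obtain ⟨hxA, hxB, hxC, hyA, hyB, hyC, hxy, hAf, hBf, hCf, -, -, -⟩ := ndfacts h
  refine ⟨fun a ha => List.idxOf_append_of_mem ha, fun z hz => ?_, ?_, ?_, fun c hc => ?_⟩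
  · rw [List.idxOf_append_of_notMem (fun h' => (hAf z h' |>.1) hz),
      List.idxOf_append_of_mem hz]
  · rw [List.idxOf_append_of_notMem hxA, List.idxOf_append_of_notMem hxB,
      List.idxOf_cons_self]
    omega
  · rw [List.idxOf_append_of_notMem hyA, List.idxOf_append_of_notMem hyB,
      List.idxOf_cons_ne _ hxy, List.idxOf_cons_self]
    omega
  · rw [List.idxOf_append_of_notMem (fun h' => (hAf c h' |>.2.1) hc),
      List.idxOf_append_of_notMem (fun h' => (hBf c h' |>.1) hc),
      List.idxOf_cons_ne _ (fun h' => hxC (by rw [h']; exact hc)),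
      List.idxOf_cons_ne _ (fun h' => hyC (by rw [h']; exact hc))]
    omega

end Pos
section Eval

set_option linter.unusedSectionVars false
variable [DecidableEq α]

lemma ite_cnd_eval {l l' v : List α} {S : Finset α} {w w' : α}
    (hl : IsRanking l) (hl' : IsRanking l') (hv : IsRanking v)
    (hwS : w ∈ S) (hmw : mins l S w) (hw'S : w' ∈ S) (hmw' : mins l' S w')
    (hcard : S.card ≤ 3) :
    (if cnd l v S then (1 : ℤ) else 0) - (if cnd l' v S then 1 else 0)
      = (if mins v S w' then 1 else 0) - (if mins v S w then 1 else 0) := by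
  rw [if_congr (cnd_iff_of_mins hl hv hwS hmw) rfl rfl,
    if_congr (cnd_iff_of_mins hl' hv hw'S hmw') rfl rfl]
  simp only [hcard, true_and]
  split_ifs <;> ring

lemma mins_pair {v : List α} (hv : IsRanking v) {a b : α} (hab : a ≠ b) :
    mins v {a, b} a ↔ v.idxOf a < v.idxOf b := by
  unfold mins
  simp only [Finset.mem_insert, Finset.mem_singleton, forall_eq_or_imp, forall_eq]
  have := idx_ne hv hab
  omega

lemma mins_triple {v : List α} (hv : IsRanking v) {a b c : α} (hab : a ≠ b) (hac : a ≠ c) :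
    mins v {a, b, c} a ↔ (v.idxOf a < v.idxOf b ∧ v.idxOf a < v.idxOf c) := by
  unfold mins
  simp only [Finset.mem_insert, Finset.mem_singleton, forall_eq_or_imp, forall_eq]
  have h1 := idx_ne hv hab
  have h2 := idx_ne hv hac
  omega

lemma cnd_false_of_card {l m : List α} {S : Finset α} (h : ¬ S.card ≤ 3) : ¬ cnd l m S :=
  fun hc => h hc.1

/-- Membership classification for the decomposed ranking. -/
lemma classify {x y : α} {A B C : List α}
    (hr : IsRanking (A ++ (y :: (B ++ x :: C)))) (c : α) :
    c ∈ A ∨ c = y ∨ c ∈ B ∨ c = x ∨ c ∈ C := by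
  have := hr.2 c
  simp only [List.mem_append, List.mem_cons] at this
  tauto

end Eval
section Diff1

set_option linter.unusedSectionVars false
set_option maxHeartbeats 1000000
variable [DecidableEq α] [Fintype α]

lemma card_pair_le3 {a b : α} : ({a, b} : Finset α).card ≤ 3 := by
  refine le_trans (Finset.card_insert_le _ _) ?_
  simp

lemma card_triple_le3 {a b c : α} : ({a, b, c} : Finset α).card ≤ 3 := by
  refine le_trans (Finset.card_insert_le _ _) ?_
  have := Finset.card_insert_le b ({c} : Finset α)
  simp at this ⊢
  omega

lemma diff1 {x y : α} {A B C : List α}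
    (hr : IsRanking (A ++ (y :: (B ++ x :: C)))) {v : List α} (hv : IsRanking v) :
    (d3 (A ++ (y :: (B ++ x :: C))) v : ℤ) - d3 (A ++ (x :: y :: (B ++ C))) v
    = ((if mins v {x, y} x then (1 : ℤ) else 0) - (if mins v {x, y} y then 1 else 0))
      + (∑ z ∈ B.toFinset,
          ((if mins v {x, z} x then (1 : ℤ) else 0) - (if mins v {x, z} z then 1 else 0)))
      + (∑ z ∈ B.toFinset ∪ C.toFinset,
          ((if mins v {x, y, z} x then (1 : ℤ) else 0) - (if mins v {x, y, z} y then 1 else 0)))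
      + (∑ p ∈ (B.toFinset ×ˢ (B.toFinset ∪ C.toFinset)).filter
            (fun p => (A ++ (y :: (B ++ x :: C))).idxOf p.1
              < (A ++ (y :: (B ++ x :: C))).idxOf p.2),
          ((if mins v {x, p.1, p.2} x then (1 : ℤ) else 0)
            - (if mins v {x, p.1, p.2} p.1 then 1 else 0))) := by
  obtain ⟨hxA, hxB, hxC, hyA, hyB, hyC, hxy, hAf, hBf, hCf, hAnd, hBnd, hCnd⟩ := ndfacts hr.1
  obtain ⟨p0A, p0y, p0B, p0x, p0C⟩ := pos0 hr.1
  obtain ⟨p1A, p1x, p1y, p1B, p1C⟩ := pos1 hr.1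
  have hr1 : IsRanking (A ++ (x :: y :: (B ++ C))) := ranking1 hr
  set π : List α := A ++ (y :: (B ++ x :: C)) with hπdef
  set π1 : List α := A ++ (x :: y :: (B ++ C)) with hπ1def
  set PP : Finset (α × α) := (B.toFinset ×ˢ (B.toFinset ∪ C.toFinset)).filter
      (fun p => π.idxOf p.1 < π.idxOf p.2) with hPPdef
  -- the four families of changed sets
  set E0 : Finset (Finset α) := {({x, y} : Finset α)} with hE0
  set E1 : Finset (Finset α) := B.toFinset.image (fun z => ({x, z} : Finset α)) with hE1
  set E2 : Finset (Finset α) :=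
    (B.toFinset ∪ C.toFinset).image (fun z => ({x, y, z} : Finset α)) with hE2
  set E3 : Finset (Finset α) := PP.image (fun p => ({x, p.1, p.2} : Finset α)) with hE3
  -- facts about elements of the families
  have hBmem : ∀ z ∈ B.toFinset, z ∈ B := fun z hz => List.mem_toFinset.1 hz
  have hBCmem : ∀ z ∈ B.toFinset ∪ C.toFinset, z ∈ B ∨ z ∈ C := by
    intro z hz
    rcases Finset.mem_union.1 hz with h | h
    · exact Or.inl (List.mem_toFinset.1 h)
    · exact Or.inr (List.mem_toFinset.1 h)
  have hBne : ∀ z ∈ B, z ≠ x ∧ z ≠ y := fun z hz => ⟨(hBf z hz).2.1, (hBf z hz).2.2⟩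
  have hCne : ∀ z ∈ C, z ≠ x ∧ z ≠ y := fun z hz => hCf z hz
  have hBCne : ∀ z, (z ∈ B ∨ z ∈ C) → z ≠ x ∧ z ≠ y := by
    rintro z (h | h)
    · exact hBne z h
    · exact hCne z h
  have hPPfacts : ∀ p ∈ PP, p.1 ∈ B ∧ (p.2 ∈ B ∨ p.2 ∈ C) ∧ p.1 ≠ p.2 ∧
      π.idxOf p.1 < π.idxOf p.2 := by
    intro p hp
    obtain ⟨hmem, hlt⟩ := Finset.mem_filter.1 hp
    obtain ⟨h1, h2⟩ := Finset.mem_product.1 hmem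
    exact ⟨hBmem _ h1, hBCmem _ h2, fun h => by rw [h] at hlt; omega, hlt⟩
  -- index bounds
  have lowπ : ∀ d, d ∉ A → A.length ≤ π.idxOf d := by
    intro d hd
    rcases classify hr d with h | rfl | h | rfl | h
    · exact absurd h hd
    · rw [p0y]
    · rw [p0B d h]; omega
    · rw [p0x]; omega
    · rw [p0C d h]; omega
  have lowπ1 : ∀ d, d ∉ A → A.length ≤ π1.idxOf d := by
    intro d hd
    rcases classify hr d with h | rfl | h | rfl | h
    · exact absurd h hd
    · rw [p1y]; omega
    · rw [p1B d h]; omega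
    · rw [p1x]
    · rw [p1C d h]; omega
  have hAlt : ∀ a ∈ A, A.idxOf a < A.length := fun a ha => List.idxOf_lt_length_iff.2 ha
  -- the old and new tops on each family
  have M1 : mins π {x, y} y := by
    intro c hc
    simp only [Finset.mem_insert, Finset.mem_singleton] at hc
    rcases hc with rfl | rfl
    · rw [p0y, p0x]; omega
    · exact le_refl _
  have M1' : mins π1 {x, y} x := by
    intro c hc
    simp only [Finset.mem_insert, Finset.mem_singleton] at hc
    rcases hc with rfl | rfl
    · exact le_refl _
    · rw [p1x, p1y]; omega
  have M2 : ∀ z ∈ B, mins π {x, z} z := by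
    intro z hz c hc
    simp only [Finset.mem_insert, Finset.mem_singleton] at hc
    have hzB := List.idxOf_lt_length_iff.2 hz
    rcases hc with rfl | rfl
    · rw [p0x, p0B _ hz]; omega
    · exact le_refl _
  have M2' : ∀ z ∈ B, mins π1 {x, z} x := by
    intro z hz c hc
    simp only [Finset.mem_insert, Finset.mem_singleton] at hc
    rcases hc with rfl | rfl
    · exact le_refl _
    · rw [p1x, p1B _ hz]; omega
  have M3 : ∀ z, (z ∈ B ∨ z ∈ C) → mins π {x, y, z} y := by
    intro z hz c hc
    simp only [Finset.mem_insert, Finset.mem_singleton] at hc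
    rcases hc with rfl | rfl | rfl
    · rw [p0y, p0x]; omega
    · exact le_refl _
    · rcases hz with h | h
      · rw [p0y, p0B _ h]; omega
      · rw [p0y, p0C _ h]; omega
  have M3' : ∀ z, (z ∈ B ∨ z ∈ C) → mins π1 {x, y, z} x := by
    intro z hz c hc
    simp only [Finset.mem_insert, Finset.mem_singleton] at hc
    rcases hc with rfl | rfl | rfl
    · exact le_refl _
    · rw [p1x, p1y]; omega
    · rcases hz with h | h
      · rw [p1x, p1B _ h]; omega
      · rw [p1x, p1C _ h]; omega
  have M4 : ∀ p ∈ PP, mins π {x, p.1, p.2} p.1 := by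
    intro p hp c hc
    obtain ⟨h1, h2, hne, hlt⟩ := hPPfacts p hp
    simp only [Finset.mem_insert, Finset.mem_singleton] at hc
    have hp1B := List.idxOf_lt_length_iff.2 h1
    rcases hc with rfl | rfl | rfl
    · rw [p0x, p0B _ h1]; omega
    · exact le_refl _
    · omega
  have M4' : ∀ p ∈ PP, mins π1 {x, p.1, p.2} x := by
    intro p hp c hc
    obtain ⟨h1, h2, hne, hlt⟩ := hPPfacts p hp
    simp only [Finset.mem_insert, Finset.mem_singleton] at hc
    rcases hc with rfl | rfl | rfl
    · exact le_refl _
    · rw [p1x, p1B _ h1]; omega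
    · rcases h2 with h | h
      · rw [p1x, p1B _ h]; omega
      · rw [p1x, p1C _ h]; omega
  -- the changed family
  set e1 : Finset (Finset α) := E0 ∪ E1 ∪ E2 ∪ E3 with he1
  have hsub : e1 ⊆ (Finset.univ : Finset α).powerset := fun S _ => by
    simp [Finset.mem_powerset]
  -- outside e1 nothing changes
  have hzero : ∀ S ∈ (Finset.univ : Finset α).powerset, S ∉ e1 →
      ((if cnd π v S then (1 : ℤ) else 0) - (if cnd π1 v S then 1 else 0)) = 0 := by
    intro S _ hSne
    by_cases h3 : S.card ≤ 3
    swap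
    · simp [cnd_false_of_card h3]
    by_cases hxS : x ∈ S
    swap
    · -- x ∉ S : relative order on S unchanged
      have herase : π.erase x = π1.erase x := by
        rw [hπdef, hπ1def, List.erase_append_right _ hxA, List.erase_append_right _ hxA]
        rw [List.erase_cons_head,
          List.erase_cons_tail (by simpa using fun h => hxy h.symm),
          List.erase_append_right _ hxB, List.erase_cons_head]
      have hiff : cnd π v S ↔ cnd π1 v S := by
        apply cnd_congr
        apply mins_congr_of_ordIso
        intro a ha b hb
        have hax : a ≠ x := fun h => hxS (h ▸ ha)
        have hbx : b ≠ x := fun h => hxS (h ▸ hb)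
        rw [← idx_erase_le_iff hr.1 (hr.2 x) (hr.2 a) (hr.2 b) hax hbx, herase,
          idx_erase_le_iff hr1.1 (hr1.2 x) (hr1.2 a) (hr1.2 b) hax hbx]
      simp [hiff]
    by_cases hA : ∃ a ∈ A, a ∈ S
    · -- S meets the common prefix A
      obtain ⟨a0, ha0A, ha0S⟩ := hA
      have key : ∀ c ∈ S, (mins π S c ↔ mins π1 S c) := by
        intro c hcS
        by_cases hcA : c ∈ A
        · have hidxc : π.idxOf c = A.idxOf c := p0A c hcA
          have hidxc1 : π1.idxOf c = A.idxOf c := p1A c hcA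
          constructor
          · intro hm d hd
            by_cases hdA : d ∈ A
            · rw [hidxc1, p1A d hdA]
              have := hm d hd
              rwa [hidxc, p0A d hdA] at this
            · rw [hidxc1]
              have := lowπ1 d hdA
              have := hAlt c hcA
              omega
          · intro hm d hd
            by_cases hdA : d ∈ A
            · rw [hidxc, p0A d hdA]
              have := hm d hd
              rwa [hidxc1, p1A d hdA] at this
            · rw [hidxc]
              have := lowπ d hdA
              have := hAlt c hcA
              omega
        · constructor
          · intro hm
            exfalso
            have h1 := hm a0 ha0S
            have h2 := lowπ c hcA
            have h3 := hAlt a0 ha0A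
            rw [p0A a0 ha0A] at h1
            omega
          · intro hm
            exfalso
            have h1 := hm a0 ha0S
            have h2 := lowπ1 c hcA
            have h3 := hAlt a0 ha0A
            rw [p1A a0 ha0A] at h1
            omega
      simp [cnd_congr key]
    · by_cases hyBS : ∃ b ∈ S, b = y ∨ b ∈ B
      · -- S would be a changed set: contradiction with S ∉ e1
        exfalso
        apply hSne
        obtain ⟨b, hbS, hb⟩ := hyBS
        have hSsub : S = insert x (S.erase x) := (Finset.insert_erase hxS).symm
        have hbx : b ≠ x := by
          rintro rfl
          rcases hb with h | h
          · exact hxy h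
          · exact hxB h
        have hbT : b ∈ S.erase x := Finset.mem_erase.2 ⟨hbx, hbS⟩
        have hTcard : (S.erase x).card ≤ 2 := by
          have := Finset.card_erase_of_mem hxS
          omega
        have hTpos : 1 ≤ (S.erase x).card := Finset.card_pos.2 ⟨b, hbT⟩
        have hTmem : ∀ c ∈ S.erase x, c = y ∨ c ∈ B ∨ c ∈ C := by
          intro c hc
          obtain ⟨hcx, hcS⟩ := Finset.mem_erase.1 hc
          rcases classify hr c with h | h | h | h | h
          · exact absurd ⟨c, h, hcS⟩ hA
          · exact Or.inl h
          · exact Or.inr (Or.inl h)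
          · exact absurd h hcx
          · exact Or.inr (Or.inr h)
        interval_cases hcard : (S.erase x).card
        · -- singleton
          obtain ⟨u, hu⟩ := Finset.card_eq_one.1 hcard
          have hbu : b = u := by rw [hu] at hbT; simpa using hbT
          subst hbu
          rcases hb with rfl | hbB
          · -- S = {x, y}
            refine Finset.mem_union.2 (Or.inl (Finset.mem_union.2 (Or.inl
              (Finset.mem_union.2 (Or.inl ?_)))))
            rw [hE0, Finset.mem_singleton, hSsub, hu]
          · -- S = {x, b}, b ∈ B
            refine Finset.mem_union.2 (Or.inl (Finset.mem_union.2 (Or.inl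
              (Finset.mem_union.2 (Or.inr ?_)))))
            rw [hE1, Finset.mem_image]
            exact ⟨b, List.mem_toFinset.2 hbB, by rw [hSsub, hu]⟩
        · -- pair
          obtain ⟨u, w, huw, hT⟩ := Finset.card_eq_two.1 hcard
          have hSxuw : S = {x, u, w} := by rw [hSsub, hT]
          have huS : u ∈ S.erase x := by rw [hT]; simp
          have hwS : w ∈ S.erase x := by rw [hT]; simp
          have hux : u ≠ x := (Finset.mem_erase.1 huS).1
          have hwx : w ≠ x := (Finset.mem_erase.1 hwS).1
          by_cases hyT : y ∈ S.erase x
          · -- S = {x, y, z}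
            have hyuw : y = u ∨ y = w := by rw [hT] at hyT; simpa using hyT
            rcases hyuw with rfl | rfl
            · have hwz : w ∈ B ∨ w ∈ C := by
                rcases hTmem w hwS with h | h | h
                · exact absurd h.symm huw
                · exact Or.inl h
                · exact Or.inr h
              refine Finset.mem_union.2 (Or.inl (Finset.mem_union.2 (Or.inr ?_)))
              rw [hE2, Finset.mem_image]
              refine ⟨w, ?_, by rw [hSxuw]⟩
              rcases hwz with h | h
              · exact Finset.mem_union.2 (Or.inl (List.mem_toFinset.2 h))
              · exact Finset.mem_union.2 (Or.inr (List.mem_toFinset.2 h))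
            · have huz : u ∈ B ∨ u ∈ C := by
                rcases hTmem u huS with h | h | h
                · exact absurd h.symm huw.symm
                · exact Or.inl h
                · exact Or.inr h
              refine Finset.mem_union.2 (Or.inl (Finset.mem_union.2 (Or.inr ?_)))
              rw [hE2, Finset.mem_image]
              refine ⟨u, ?_, ?_⟩
              · rcases huz with h | h
                · exact Finset.mem_union.2 (Or.inl (List.mem_toFinset.2 h))
                · exact Finset.mem_union.2 (Or.inr (List.mem_toFinset.2 h))
              · rw [hSxuw]
                rw [Finset.pair_comm u y]
          · -- S = {x, z, t} with z, t ∈ B ∪ C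
            have hbuw : b = u ∨ b = w := by rw [hT] at hbT; simpa using hbT
            have hbB : b ∈ B := by
              rcases hb with rfl | h
              · exact absurd hbT hyT
              · exact h
            have huy : u ≠ y := fun h => hyT (h ▸ huS)
            have hwy : w ≠ y := fun h => hyT (h ▸ hwS)
            have huBC : u ∈ B ∨ u ∈ C := by
              rcases hTmem u huS with h | h | h
              · exact absurd h huy
              · exact Or.inl h
              · exact Or.inr h
            have hwBC : w ∈ B ∨ w ∈ C := by
              rcases hTmem w hwS with h | h | h
              · exact absurd h hwy
              · exact Or.inl h
              · exact Or.inr h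
            have hidxne : π.idxOf u ≠ π.idxOf w := idx_ne hr huw
            have hmemPP : ∀ z t : α, z ∈ B → (t ∈ B ∨ t ∈ C) →
                π.idxOf z < π.idxOf t → (z, t) ∈ PP := by
              intro z t hz ht hlt
              rw [hPPdef, Finset.mem_filter]
              refine ⟨Finset.mem_product.2 ⟨List.mem_toFinset.2 hz, ?_⟩, hlt⟩
              rcases ht with h | h
              · exact Finset.mem_union.2 (Or.inl (List.mem_toFinset.2 h))
              · exact Finset.mem_union.2 (Or.inr (List.mem_toFinset.2 h))
            rcases lt_trichotomy (π.idxOf u) (π.idxOf w) with hlt | heq | hgt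
            · have huB : u ∈ B := by
                rcases huBC with h | h
                · exact h
                · exfalso
                  have hwC : w ∈ C := by
                    rcases hwBC with hw | hw
                    · exfalso
                      have h1 := p0C _ h
                      have h2 := p0B _ hw
                      have h3 := List.idxOf_lt_length_iff.2 hw
                      omega
                    · exact hw
                  rcases hbuw with rfl | rfl
                  · exact (hBf b hbB).1 h
                  · exact (hBf b hbB).1 hwC
              refine Finset.mem_union.2 (Or.inr ?_)
              rw [hE3, Finset.mem_image]
              exact ⟨(u, w), hmemPP u w huB hwBC hlt, by rw [hSxuw]⟩
            · exact absurd heq hidxne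
            · have hwB : w ∈ B := by
                rcases hwBC with h | h
                · exact h
                · exfalso
                  have huC : u ∈ C := by
                    rcases huBC with hu | hu
                    · exfalso
                      have h1 := p0C _ h
                      have h2 := p0B _ hu
                      have h3 := List.idxOf_lt_length_iff.2 hu
                      omega
                    · exact hu
                  rcases hbuw with rfl | rfl
                  · exact (hBf b hbB).1 huC
                  · exact (hBf b hbB).1 h
              refine Finset.mem_union.2 (Or.inr ?_)
              rw [hE3, Finset.mem_image]
              refine ⟨(w, u), hmemPP w u hwB huBC hgt, ?_⟩
              rw [hSxuw, Finset.pair_comm u w]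
      · -- S ⊆ {x} ∪ C : relative order unchanged
        have hiff : cnd π v S ↔ cnd π1 v S := by
          apply cnd_congr
          apply mins_congr_of_ordIso
          intro a ha b hb
          have hclass : ∀ c ∈ S, c = x ∨ c ∈ C := by
            intro c hcS
            rcases classify hr c with h | h | h | h | h
            · exact absurd ⟨c, h, hcS⟩ hA
            · exact absurd ⟨c, hcS, Or.inl h⟩ hyBS
            · exact absurd ⟨c, hcS, Or.inr h⟩ hyBS
            · exact Or.inl h
            · exact Or.inr h
          rcases hclass a ha with rfl | haC <;> rcases hclass b hb with rfl | hbC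
          · omega
          · rw [p0x, p0C b hbC, p1x, p1C b hbC]; omega
          · rw [p0x, p0C a haC, p1x, p1C a haC]; omega
          · rw [p0C a haC, p0C b hbC, p1C a haC, p1C b hbC]; omega
        simp [hiff]
  -- cardinalities of the changed sets
  have cpair : ∀ a b : α, a ≠ b → ({a, b} : Finset α).card = 2 := by
    intro a b h
    rw [Finset.card_insert_of_notMem (by simp [h]), Finset.card_singleton]
  have ctrip : ∀ a b c : α, a ≠ b → a ≠ c → b ≠ c → ({a, b, c} : Finset α).card = 3 := by
    intro a b c h1 h2 h3
    rw [Finset.card_insert_of_notMem (by simp [h1, h2]), cpair b c h3]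
  have cardE01 : ∀ S, S ∈ E0 ∪ E1 → S.card = 2 := by
    intro S hS
    rcases Finset.mem_union.1 hS with h | h
    · rw [hE0, Finset.mem_singleton] at h
      rw [h]; exact cpair x y hxy
    · rw [hE1, Finset.mem_image] at h
      obtain ⟨z, hz, rfl⟩ := h
      exact cpair x z (Ne.symm (hBne z (hBmem z hz)).1)
  have cardE2 : ∀ S, S ∈ E2 → S.card = 3 := by
    intro S hS
    rw [hE2, Finset.mem_image] at hS
    obtain ⟨z, hz, rfl⟩ := hS
    have h := hBCne z (hBCmem z hz)
    exact ctrip x y z hxy (Ne.symm h.1) (Ne.symm h.2)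
  have cardE3 : ∀ S, S ∈ E3 → S.card = 3 := by
    intro S hS
    rw [hE3, Finset.mem_image] at hS
    obtain ⟨p, hp, rfl⟩ := hS
    obtain ⟨h1, h2, hne, hlt⟩ := hPPfacts p hp
    exact ctrip x p.1 p.2 (Ne.symm (hBne _ h1).1) (Ne.symm (hBCne _ h2).1) hne
  have yE3 : ∀ S, S ∈ E3 → y ∉ S := by
    intro S hS
    rw [hE3, Finset.mem_image] at hS
    obtain ⟨p, hp, rfl⟩ := hS
    obtain ⟨h1, h2, hne, hlt⟩ := hPPfacts p hp
    simp only [Finset.mem_insert, Finset.mem_singleton]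
    push_neg
    exact ⟨Ne.symm hxy, Ne.symm (hBne _ h1).2, Ne.symm (hBCne _ h2).2⟩
  have hd01 : Disjoint E0 E1 := by
    rw [Finset.disjoint_left]
    intro S hS0 hS1
    rw [hE0, Finset.mem_singleton] at hS0
    rw [hE1, Finset.mem_image] at hS1
    obtain ⟨z, hz, hzeq⟩ := hS1
    have : y ∈ ({x, z} : Finset α) := by rw [hzeq, hS0]; simp
    simp only [Finset.mem_insert, Finset.mem_singleton] at this
    rcases this with h | h
    · exact hxy h.symm
    · exact (hBne z (hBmem z hz)).2 h.symm
  have hd012 : Disjoint (E0 ∪ E1) E2 := by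
    rw [Finset.disjoint_left]
    intro S hS01 hS2
    have := cardE01 S hS01
    have := cardE2 S hS2
    omega
  have hd0123 : Disjoint (E0 ∪ E1 ∪ E2) E3 := by
    rw [Finset.disjoint_left]
    intro S hS012 hS3
    rcases Finset.mem_union.1 hS012 with h | h
    · have := cardE01 S h
      have := cardE3 S hS3
      omega
    · rw [hE2, Finset.mem_image] at h
      obtain ⟨z, hz, hzeq⟩ := h
      apply yE3 S hS3
      rw [← hzeq]
      simp
  have hinj1 : ∀ z₁ ∈ B.toFinset, ∀ z₂ ∈ B.toFinset,
      ({x, z₁} : Finset α) = {x, z₂} → z₁ = z₂ := by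
    intro z₁ h₁ z₂ h₂ heq
    have : z₁ ∈ ({x, z₂} : Finset α) := by rw [← heq]; simp
    simp only [Finset.mem_insert, Finset.mem_singleton] at this
    rcases this with h | h
    · exact absurd h (hBne _ (hBmem _ h₁)).1
    · exact h
  have hinj2 : ∀ z₁ ∈ B.toFinset ∪ C.toFinset, ∀ z₂ ∈ B.toFinset ∪ C.toFinset,
      ({x, y, z₁} : Finset α) = {x, y, z₂} → z₁ = z₂ := by
    intro z₁ h₁ z₂ h₂ heq
    have : z₁ ∈ ({x, y, z₂} : Finset α) := by rw [← heq]; simp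
    simp only [Finset.mem_insert, Finset.mem_singleton] at this
    have hne := hBCne z₁ (hBCmem _ h₁)
    rcases this with h | h | h
    · exact absurd h hne.1
    · exact absurd h hne.2
    · exact h
  have hinj3 : ∀ p ∈ PP, ∀ q ∈ PP,
      ({x, p.1, p.2} : Finset α) = {x, q.1, q.2} → p = q := by
    intro p hp q hq heq
    obtain ⟨hp1, hp2, hpne, hplt⟩ := hPPfacts p hp
    obtain ⟨hq1, hq2, hqne, hqlt⟩ := hPPfacts q hq
    have m1 : p.1 ∈ ({x, q.1, q.2} : Finset α) := by rw [← heq]; simp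
    have m2 : p.2 ∈ ({x, q.1, q.2} : Finset α) := by rw [← heq]; simp
    simp only [Finset.mem_insert, Finset.mem_singleton] at m1 m2
    rcases m1 with h1 | h1 | h1
    · exact absurd h1 (hBne _ hp1).1
    · rcases m2 with h2 | h2 | h2
      · exact absurd h2 (hBCne _ hp2).1
      · exact absurd (h1.trans h2.symm) hpne
      · exact Prod.ext h1 h2
    · rcases m2 with h2 | h2 | h2
      · exact absurd h2 (hBCne _ hp2).1
      · exfalso
        rw [h1, h2] at hplt
        omega
      · exfalso
        rw [h1] at hplt
        rw [h2] at hplt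
        omega
  have hstart : (d3 π v : ℤ) - d3 π1 v
      = ∑ S ∈ (Finset.univ : Finset α).powerset,
        ((if cnd π v S then (1 : ℤ) else 0) - (if cnd π1 v S then 1 else 0)) := by
    rw [d3_eq_sum, d3_eq_sum]
    push_cast
    rw [Finset.sum_sub_distrib]
  rw [hstart, ← Finset.sum_subset hsub hzero, he1,
    Finset.sum_union hd0123, Finset.sum_union hd012, Finset.sum_union hd01,
    hE0, Finset.sum_singleton, hE1, Finset.sum_image hinj1, hE2, Finset.sum_image hinj2,
    hE3, Finset.sum_image hinj3]
  congr 1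
  · congr 1
    · congr 1
      · exact ite_cnd_eval hr hr1 hv (by simp) M1 (by simp) M1' card_pair_le3
      · refine Finset.sum_congr rfl (fun z hz => ?_)
        exact ite_cnd_eval hr hr1 hv (by simp) (M2 z (hBmem z hz)) (by simp)
          (M2' z (hBmem z hz)) card_pair_le3
    · refine Finset.sum_congr rfl (fun z hz => ?_)
      exact ite_cnd_eval hr hr1 hv (by simp) (M3 z (hBCmem z hz)) (by simp)
        (M3' z (hBCmem z hz)) card_triple_le3
  · refine Finset.sum_congr rfl (fun p hp => ?_)
    exact ite_cnd_eval hr hr1 hv (by simp) (M4 p hp) (by simp) (M4' p hp) card_triple_le3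

end Diff1
section Diff2

set_option linter.unusedSectionVars false
set_option maxHeartbeats 1000000
variable [DecidableEq α] [Fintype α]

lemma diff2 {x y : α} {A B C : List α}
    (hr : IsRanking (A ++ (y :: (B ++ x :: C)))) {v : List α} (hv : IsRanking v) :
    (d3 (A ++ (y :: (B ++ x :: C))) v : ℤ) - d3 (A ++ (B ++ x :: y :: C)) v
    = ((if mins v {x, y} x then (1 : ℤ) else 0) - (if mins v {x, y} y then 1 else 0))
      + (∑ z ∈ B.toFinset,
          ((if mins v {y, z} z then (1 : ℤ) else 0) - (if mins v {y, z} y then 1 else 0)))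
      + (∑ z ∈ B.toFinset,
          ((if mins v {x, y, z} z then (1 : ℤ) else 0) - (if mins v {x, y, z} y then 1 else 0)))
      + (∑ z ∈ C.toFinset,
          ((if mins v {x, y, z} x then (1 : ℤ) else 0) - (if mins v {x, y, z} y then 1 else 0)))
      + (∑ p ∈ (B.toFinset ×ˢ (B.toFinset ∪ C.toFinset)).filter
            (fun p => (A ++ (y :: (B ++ x :: C))).idxOf p.1
              < (A ++ (y :: (B ++ x :: C))).idxOf p.2),
          ((if mins v {y, p.1, p.2} p.1 then (1 : ℤ) else 0)
            - (if mins v {y, p.1, p.2} y then 1 else 0))) := by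
  obtain ⟨hxA, hxB, hxC, hyA, hyB, hyC, hxy, hAf, hBf, hCf, hAnd, hBnd, hCnd⟩ := ndfacts hr.1
  obtain ⟨p0A, p0y, p0B, p0x, p0C⟩ := pos0 hr.1
  obtain ⟨p2A, p2B, p2x, p2y, p2C⟩ := pos2 hr.1
  have hr2 : IsRanking (A ++ (B ++ x :: y :: C)) := ranking2 hr
  set π : List α := A ++ (y :: (B ++ x :: C)) with hπdef
  set π2 : List α := A ++ (B ++ x :: y :: C) with hπ2def
  set PP : Finset (α × α) := (B.toFinset ×ˢ (B.toFinset ∪ C.toFinset)).filter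
      (fun p => π.idxOf p.1 < π.idxOf p.2) with hPPdef
  set E0 : Finset (Finset α) := {({x, y} : Finset α)} with hE0
  set E1 : Finset (Finset α) := B.toFinset.image (fun z => ({y, z} : Finset α)) with hE1
  set E2 : Finset (Finset α) := B.toFinset.image (fun z => ({x, y, z} : Finset α)) with hE2
  set E4 : Finset (Finset α) := C.toFinset.image (fun z => ({x, y, z} : Finset α)) with hE4
  set E3 : Finset (Finset α) := PP.image (fun p => ({y, p.1, p.2} : Finset α)) with hE3
  have hBmem : ∀ z ∈ B.toFinset, z ∈ B := fun z hz => List.mem_toFinset.1 hz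
  have hCmem : ∀ z ∈ C.toFinset, z ∈ C := fun z hz => List.mem_toFinset.1 hz
  have hBCmem : ∀ z ∈ B.toFinset ∪ C.toFinset, z ∈ B ∨ z ∈ C := by
    intro z hz
    rcases Finset.mem_union.1 hz with h | h
    · exact Or.inl (List.mem_toFinset.1 h)
    · exact Or.inr (List.mem_toFinset.1 h)
  have hBne : ∀ z ∈ B, z ≠ x ∧ z ≠ y := fun z hz => ⟨(hBf z hz).2.1, (hBf z hz).2.2⟩
  have hCne : ∀ z ∈ C, z ≠ x ∧ z ≠ y := fun z hz => hCf z hz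
  have hBCne : ∀ z, (z ∈ B ∨ z ∈ C) → z ≠ x ∧ z ≠ y := by
    rintro z (h | h)
    · exact hBne z h
    · exact hCne z h
  have hPPfacts : ∀ p ∈ PP, p.1 ∈ B ∧ (p.2 ∈ B ∨ p.2 ∈ C) ∧ p.1 ≠ p.2 ∧
      π.idxOf p.1 < π.idxOf p.2 := by
    intro p hp
    obtain ⟨hmem, hlt⟩ := Finset.mem_filter.1 hp
    obtain ⟨h1, h2⟩ := Finset.mem_product.1 hmem
    exact ⟨hBmem _ h1, hBCmem _ h2, fun h => by rw [h] at hlt; omega, hlt⟩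
  have lowπ : ∀ d, d ∉ A → A.length ≤ π.idxOf d := by
    intro d hd
    rcases classify hr d with h | rfl | h | rfl | h
    · exact absurd h hd
    · rw [p0y]
    · rw [p0B _ h]; omega
    · rw [p0x]; omega
    · rw [p0C _ h]; omega
  have lowπ2 : ∀ d, d ∉ A → A.length ≤ π2.idxOf d := by
    intro d hd
    rcases classify hr d with h | rfl | h | rfl | h
    · exact absurd h hd
    · rw [p2y]; omega
    · rw [p2B _ h]; omega
    · rw [p2x]; omega
    · rw [p2C _ h]; omega
  have hAlt : ∀ a ∈ A, A.idxOf a < A.length := fun a ha => List.idxOf_lt_length_iff.2 ha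
  -- old and new tops
  have M1 : mins π {x, y} y := by
    intro c hc
    simp only [Finset.mem_insert, Finset.mem_singleton] at hc
    rcases hc with rfl | rfl
    · rw [p0y, p0x]; omega
    · exact le_refl _
  have M1' : mins π2 {x, y} x := by
    intro c hc
    simp only [Finset.mem_insert, Finset.mem_singleton] at hc
    rcases hc with rfl | rfl
    · exact le_refl _
    · rw [p2x, p2y]; omega
  have M2 : ∀ z ∈ B, mins π {y, z} y := by
    intro z hz c hc
    simp only [Finset.mem_insert, Finset.mem_singleton] at hc
    rcases hc with rfl | rfl
    · exact le_refl _
    · rw [p0y, p0B _ hz]; omega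
  have M2' : ∀ z ∈ B, mins π2 {y, z} z := by
    intro z hz c hc
    simp only [Finset.mem_insert, Finset.mem_singleton] at hc
    have hzB := List.idxOf_lt_length_iff.2 hz
    rcases hc with rfl | rfl
    · rw [p2y, p2B _ hz]; omega
    · exact le_refl _
  have M3 : ∀ z, (z ∈ B ∨ z ∈ C) → mins π {x, y, z} y := by
    intro z hz c hc
    simp only [Finset.mem_insert, Finset.mem_singleton] at hc
    rcases hc with rfl | rfl | rfl
    · rw [p0y, p0x]; omega
    · exact le_refl _
    · rcases hz with h | h
      · rw [p0y, p0B _ h]; omega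
      · rw [p0y, p0C _ h]; omega
  have M3B' : ∀ z ∈ B, mins π2 {x, y, z} z := by
    intro z hz c hc
    simp only [Finset.mem_insert, Finset.mem_singleton] at hc
    have hzB := List.idxOf_lt_length_iff.2 hz
    rcases hc with rfl | rfl | rfl
    · rw [p2x, p2B _ hz]; omega
    · rw [p2y, p2B _ hz]; omega
    · exact le_refl _
  have M3C' : ∀ z ∈ C, mins π2 {x, y, z} x := by
    intro z hz c hc
    simp only [Finset.mem_insert, Finset.mem_singleton] at hc
    rcases hc with rfl | rfl | rfl
    · exact le_refl _
    · rw [p2x, p2y]; omega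
    · rw [p2x, p2C _ hz]; omega
  have M4 : ∀ p ∈ PP, mins π {y, p.1, p.2} y := by
    intro p hp c hc
    obtain ⟨h1, h2, hne, hlt⟩ := hPPfacts p hp
    simp only [Finset.mem_insert, Finset.mem_singleton] at hc
    rcases hc with rfl | rfl | rfl
    · exact le_refl _
    · rw [p0y, p0B _ h1]; omega
    · rw [p0y]
      have := lowπ p.2 (by
        intro hA2
        rcases h2 with h | h
        · exact (hAf _ hA2).1 h
        · exact (hAf _ hA2).2.1 h)
      have hne2 : π.idxOf p.2 ≠ A.length := by
        rw [← p0y]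
        exact fun hh => (hBCne _ h2).2 (idx_inj hr hh)
      omega
  have M4' : ∀ p ∈ PP, mins π2 {y, p.1, p.2} p.1 := by
    intro p hp c hc
    obtain ⟨h1, h2, hne, hlt⟩ := hPPfacts p hp
    simp only [Finset.mem_insert, Finset.mem_singleton] at hc
    have hp1B := List.idxOf_lt_length_iff.2 h1
    rcases hc with rfl | rfl | rfl
    · rw [p2y, p2B _ h1]; omega
    · exact le_refl _
    · rcases h2 with h | h
      · rw [p2B _ h1, p2B _ h]
        have := p0B _ h1
        have := p0B _ h
        omega
      · rw [p2B _ h1, p2C _ h]; omega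
  set e2 : Finset (Finset α) := E0 ∪ E1 ∪ E2 ∪ E4 ∪ E3 with he2
  have hsub : e2 ⊆ (Finset.univ : Finset α).powerset := fun S _ => by
    simp [Finset.mem_powerset]
  have hzero : ∀ S ∈ (Finset.univ : Finset α).powerset, S ∉ e2 →
      ((if cnd π v S then (1 : ℤ) else 0) - (if cnd π2 v S then 1 else 0)) = 0 := by
    intro S _ hSne
    by_cases h3 : S.card ≤ 3
    swap
    · simp [cnd_false_of_card h3]
    by_cases hyS : y ∈ S
    swap
    · have herase : π.erase y = π2.erase y := by
        rw [hπdef, hπ2def, List.erase_append_right _ hyA, List.erase_append_right _ hyA,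
          List.erase_cons_head, List.erase_append_right _ hyB,
          List.erase_cons_tail (by simpa using hxy), List.erase_cons_head]
      have hiff : cnd π v S ↔ cnd π2 v S := by
        apply cnd_congr
        apply mins_congr_of_ordIso
        intro a ha b hb
        have hax : a ≠ y := fun h => hyS (h ▸ ha)
        have hbx : b ≠ y := fun h => hyS (h ▸ hb)
        rw [← idx_erase_le_iff hr.1 (hr.2 y) (hr.2 a) (hr.2 b) hax hbx, herase,
          idx_erase_le_iff hr2.1 (hr2.2 y) (hr2.2 a) (hr2.2 b) hax hbx]
      simp [hiff]
    by_cases hA : ∃ a ∈ A, a ∈ S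
    · obtain ⟨a0, ha0A, ha0S⟩ := hA
      have key : ∀ c ∈ S, (mins π S c ↔ mins π2 S c) := by
        intro c hcS
        by_cases hcA : c ∈ A
        · have hidxc : π.idxOf c = A.idxOf c := p0A c hcA
          have hidxc2 : π2.idxOf c = A.idxOf c := p2A c hcA
          constructor
          · intro hm d hd
            by_cases hdA : d ∈ A
            · rw [hidxc2, p2A d hdA]
              have := hm d hd
              rwa [hidxc, p0A d hdA] at this
            · rw [hidxc2]
              have := lowπ2 d hdA
              have := hAlt c hcA
              omega
          · intro hm d hd
            by_cases hdA : d ∈ A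
            · rw [hidxc, p0A d hdA]
              have := hm d hd
              rwa [hidxc2, p2A d hdA] at this
            · rw [hidxc]
              have := lowπ d hdA
              have := hAlt c hcA
              omega
        · constructor
          · intro hm
            exfalso
            have h1 := hm a0 ha0S
            have h2 := lowπ c hcA
            have h3 := hAlt a0 ha0A
            rw [p0A a0 ha0A] at h1
            omega
          · intro hm
            exfalso
            have h1 := hm a0 ha0S
            have h2 := lowπ2 c hcA
            have h3 := hAlt a0 ha0A
            rw [p2A a0 ha0A] at h1
            omega
      simp [cnd_congr key]
    · by_cases hxBS : ∃ b ∈ S, b = x ∨ b ∈ B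
      · exfalso
        apply hSne
        obtain ⟨b, hbS, hb⟩ := hxBS
        have hSsub : S = insert y (S.erase y) := (Finset.insert_erase hyS).symm
        have hby : b ≠ y := by
          rintro rfl
          rcases hb with h | h
          · exact hxy h.symm
          · exact hyB h
        have hbT : b ∈ S.erase y := Finset.mem_erase.2 ⟨hby, hbS⟩
        have hTcard : (S.erase y).card ≤ 2 := by
          have := Finset.card_erase_of_mem hyS
          omega
        have hTpos : 1 ≤ (S.erase y).card := Finset.card_pos.2 ⟨b, hbT⟩
        have hTmem : ∀ c ∈ S.erase y, c = x ∨ c ∈ B ∨ c ∈ C := by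
          intro c hc
          obtain ⟨hcy, hcS⟩ := Finset.mem_erase.1 hc
          rcases classify hr c with h | h | h | h | h
          · exact absurd ⟨c, h, hcS⟩ hA
          · exact absurd h hcy
          · exact Or.inr (Or.inl h)
          · exact Or.inl h
          · exact Or.inr (Or.inr h)
        interval_cases hcard : (S.erase y).card
        · obtain ⟨u, hu⟩ := Finset.card_eq_one.1 hcard
          have hbu : b = u := by rw [hu] at hbT; simpa using hbT
          subst hbu
          rcases hb with rfl | hbB
          · refine Finset.mem_union.2 (Or.inl (Finset.mem_union.2 (Or.inl
              (Finset.mem_union.2 (Or.inl (Finset.mem_union.2 (Or.inl ?_)))))))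
            rw [hE0, Finset.mem_singleton, hSsub, hu, Finset.pair_comm]
          · refine Finset.mem_union.2 (Or.inl (Finset.mem_union.2 (Or.inl
              (Finset.mem_union.2 (Or.inl (Finset.mem_union.2 (Or.inr ?_)))))))
            rw [hE1, Finset.mem_image]
            exact ⟨b, List.mem_toFinset.2 hbB, by rw [hSsub, hu]⟩
        · obtain ⟨u, w, huw, hT⟩ := Finset.card_eq_two.1 hcard
          have hSyuw : S = {y, u, w} := by rw [hSsub, hT]
          have huS : u ∈ S.erase y := by rw [hT]; simp
          have hwS : w ∈ S.erase y := by rw [hT]; simp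
          have huy : u ≠ y := (Finset.mem_erase.1 huS).1
          have hwy : w ≠ y := (Finset.mem_erase.1 hwS).1
          by_cases hxT : x ∈ S.erase y
          · have hxuw : x = u ∨ x = w := by rw [hT] at hxT; simpa using hxT
            rcases hxuw with rfl | rfl
            · have hwz : w ∈ B ∨ w ∈ C := by
                rcases hTmem w hwS with h | h | h
                · exact absurd h.symm huw
                · exact Or.inl h
                · exact Or.inr h
              have hSeq : S = {x, y, w} := by
                rw [hSyuw, Finset.insert_comm]
              rcases hwz with h | h
              · refine Finset.mem_union.2 (Or.inl (Finset.mem_union.2 (Or.inl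
                  (Finset.mem_union.2 (Or.inr ?_)))))
                rw [hE2, Finset.mem_image]
                exact ⟨w, List.mem_toFinset.2 h, hSeq.symm⟩
              · refine Finset.mem_union.2 (Or.inl (Finset.mem_union.2 (Or.inr ?_)))
                rw [hE4, Finset.mem_image]
                exact ⟨w, List.mem_toFinset.2 h, hSeq.symm⟩
            · have huz : u ∈ B ∨ u ∈ C := by
                rcases hTmem u huS with h | h | h
                · exact absurd h.symm huw.symm
                · exact Or.inl h
                · exact Or.inr h
              have hSeq : S = {x, y, u} := by
                rw [hSyuw, Finset.pair_comm u x, Finset.insert_comm]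
              rcases huz with h | h
              · refine Finset.mem_union.2 (Or.inl (Finset.mem_union.2 (Or.inl
                  (Finset.mem_union.2 (Or.inr ?_)))))
                rw [hE2, Finset.mem_image]
                exact ⟨u, List.mem_toFinset.2 h, hSeq.symm⟩
              · refine Finset.mem_union.2 (Or.inl (Finset.mem_union.2 (Or.inr ?_)))
                rw [hE4, Finset.mem_image]
                exact ⟨u, List.mem_toFinset.2 h, hSeq.symm⟩
          · have hbuw : b = u ∨ b = w := by rw [hT] at hbT; simpa using hbT
            have hbB : b ∈ B := by
              rcases hb with rfl | h
              · exact absurd hbT hxT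
              · exact h
            have hux : u ≠ x := fun h => hxT (h ▸ huS)
            have hwx : w ≠ x := fun h => hxT (h ▸ hwS)
            have huBC : u ∈ B ∨ u ∈ C := by
              rcases hTmem u huS with h | h | h
              · exact absurd h hux
              · exact Or.inl h
              · exact Or.inr h
            have hwBC : w ∈ B ∨ w ∈ C := by
              rcases hTmem w hwS with h | h | h
              · exact absurd h hwx
              · exact Or.inl h
              · exact Or.inr h
            have hidxne : π.idxOf u ≠ π.idxOf w := idx_ne hr huw
            have hmemPP : ∀ z t : α, z ∈ B → (t ∈ B ∨ t ∈ C) →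
                π.idxOf z < π.idxOf t → (z, t) ∈ PP := by
              intro z t hz ht hlt
              rw [hPPdef, Finset.mem_filter]
              refine ⟨Finset.mem_product.2 ⟨List.mem_toFinset.2 hz, ?_⟩, hlt⟩
              rcases ht with h | h
              · exact Finset.mem_union.2 (Or.inl (List.mem_toFinset.2 h))
              · exact Finset.mem_union.2 (Or.inr (List.mem_toFinset.2 h))
            rcases lt_trichotomy (π.idxOf u) (π.idxOf w) with hlt | heq | hgt
            · have huB : u ∈ B := by
                rcases huBC with h | h
                · exact h
                · exfalso
                  have hwC : w ∈ C := by
                    rcases hwBC with hw | hw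
                    · exfalso
                      have h1 := p0C _ h
                      have h2 := p0B _ hw
                      have h3 := List.idxOf_lt_length_iff.2 hw
                      omega
                    · exact hw
                  rcases hbuw with rfl | rfl
                  · exact (hBf b hbB).1 h
                  · exact (hBf b hbB).1 hwC
              refine Finset.mem_union.2 (Or.inr ?_)
              rw [hE3, Finset.mem_image]
              exact ⟨(u, w), hmemPP u w huB hwBC hlt, by rw [hSyuw]⟩
            · exact absurd heq hidxne
            · have hwB : w ∈ B := by
                rcases hwBC with h | h
                · exact h
                · exfalso
                  have huC : u ∈ C := by
                    rcases huBC with hu | hu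
                    · exfalso
                      have h1 := p0C _ h
                      have h2 := p0B _ hu
                      have h3 := List.idxOf_lt_length_iff.2 hu
                      omega
                    · exact hu
                  rcases hbuw with rfl | rfl
                  · exact (hBf b hbB).1 huC
                  · exact (hBf b hbB).1 h
              refine Finset.mem_union.2 (Or.inr ?_)
              rw [hE3, Finset.mem_image]
              refine ⟨(w, u), hmemPP w u hwB huBC hgt, ?_⟩
              rw [hSyuw, Finset.pair_comm u w]
      · have hiff : cnd π v S ↔ cnd π2 v S := by
          apply cnd_congr
          apply mins_congr_of_ordIso
          intro a ha b hb
          have hclass : ∀ c ∈ S, c = y ∨ c ∈ C := by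
            intro c hcS
            rcases classify hr c with h | h | h | h | h
            · exact absurd ⟨c, h, hcS⟩ hA
            · exact Or.inl h
            · exact absurd ⟨c, hcS, Or.inr h⟩ hxBS
            · exact absurd ⟨c, hcS, Or.inl h⟩ hxBS
            · exact Or.inr h
          rcases hclass a ha with rfl | haC <;> rcases hclass b hb with rfl | hbC
          · omega
          · rw [p0y, p0C b hbC, p2y, p2C b hbC]; omega
          · rw [p0y, p0C a haC, p2y, p2C a haC]; omega
          · rw [p0C a haC, p0C b hbC, p2C a haC, p2C b hbC]; omega
        simp [hiff]
  have cpair : ∀ a b : α, a ≠ b → ({a, b} : Finset α).card = 2 := by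
    intro a b h
    rw [Finset.card_insert_of_notMem (by simp [h]), Finset.card_singleton]
  have ctrip : ∀ a b c : α, a ≠ b → a ≠ c → b ≠ c → ({a, b, c} : Finset α).card = 3 := by
    intro a b c h1 h2 h3
    rw [Finset.card_insert_of_notMem (by simp [h1, h2]), cpair b c h3]
  have cardE01 : ∀ S, S ∈ E0 ∪ E1 → S.card = 2 := by
    intro S hS
    rcases Finset.mem_union.1 hS with h | h
    · rw [hE0, Finset.mem_singleton] at h
      rw [h]; exact cpair x y hxy
    · rw [hE1, Finset.mem_image] at h
      obtain ⟨z, hz, rfl⟩ := h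
      exact cpair y z (Ne.symm (hBne z (hBmem z hz)).2)
  have cardE2 : ∀ S, S ∈ E2 ∪ E4 → S.card = 3 := by
    intro S hS
    have : ∃ z, (z ∈ B ∨ z ∈ C) ∧ S = {x, y, z} := by
      rcases Finset.mem_union.1 hS with h | h
      · rw [hE2, Finset.mem_image] at h
        obtain ⟨z, hz, rfl⟩ := h
        exact ⟨z, Or.inl (hBmem z hz), rfl⟩
      · rw [hE4, Finset.mem_image] at h
        obtain ⟨z, hz, rfl⟩ := h
        exact ⟨z, Or.inr (hCmem z hz), rfl⟩
    obtain ⟨z, hz, rfl⟩ := this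
    have h := hBCne z hz
    exact ctrip x y z hxy (Ne.symm h.1) (Ne.symm h.2)
  have cardE3 : ∀ S, S ∈ E3 → S.card = 3 := by
    intro S hS
    rw [hE3, Finset.mem_image] at hS
    obtain ⟨p, hp, rfl⟩ := hS
    obtain ⟨h1, h2, hne, hlt⟩ := hPPfacts p hp
    exact ctrip y p.1 p.2 (Ne.symm (hBne _ h1).2) (Ne.symm (hBCne _ h2).2) hne
  have xE3 : ∀ S, S ∈ E3 → x ∉ S := by
    intro S hS
    rw [hE3, Finset.mem_image] at hS
    obtain ⟨p, hp, rfl⟩ := hS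
    obtain ⟨h1, h2, hne, hlt⟩ := hPPfacts p hp
    simp only [Finset.mem_insert, Finset.mem_singleton]
    push_neg
    exact ⟨hxy, Ne.symm (hBne _ h1).1, Ne.symm (hBCne _ h2).1⟩
  have hd01 : Disjoint E0 E1 := by
    rw [Finset.disjoint_left]
    intro S hS0 hS1
    rw [hE0, Finset.mem_singleton] at hS0
    rw [hE1, Finset.mem_image] at hS1
    obtain ⟨z, hz, hzeq⟩ := hS1
    have : x ∈ ({y, z} : Finset α) := by rw [hzeq, hS0]; simp
    simp only [Finset.mem_insert, Finset.mem_singleton] at this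
    rcases this with h | h
    · exact hxy h
    · exact (hBne z (hBmem z hz)).1 h.symm
  have hd012 : Disjoint (E0 ∪ E1) E2 := by
    rw [Finset.disjoint_left]
    intro S hS01 hS2
    have := cardE01 S hS01
    have := cardE2 S (Finset.mem_union.2 (Or.inl hS2))
    omega
  have hd0124 : Disjoint (E0 ∪ E1 ∪ E2) E4 := by
    rw [Finset.disjoint_left]
    intro S hS012 hS4
    rcases Finset.mem_union.1 hS012 with h | h
    · have := cardE01 S h
      have := cardE2 S (Finset.mem_union.2 (Or.inr hS4))
      omega
    · rw [hE2, Finset.mem_image] at h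
      rw [hE4, Finset.mem_image] at hS4
      obtain ⟨z, hz, hzeq⟩ := h
      obtain ⟨z', hz', hzeq'⟩ := hS4
      have hzB := hBmem z hz
      have hzC := hCmem z' hz'
      have : z ∈ ({x, y, z'} : Finset α) := by rw [hzeq', ← hzeq]; simp
      simp only [Finset.mem_insert, Finset.mem_singleton] at this
      rcases this with h | h | h
      · exact (hBne z hzB).1 h
      · exact (hBne z hzB).2 h
      · exact (hBf z hzB).1 (h ▸ hzC)
  have hd01243 : Disjoint (E0 ∪ E1 ∪ E2 ∪ E4) E3 := by
    rw [Finset.disjoint_left]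
    intro S hS0124 hS3
    have hxS : x ∉ S := xE3 S hS3
    rcases Finset.mem_union.1 hS0124 with h | h
    · rcases Finset.mem_union.1 h with h' | h'
      · rcases Finset.mem_union.1 h' with h'' | h''
        · rw [hE0, Finset.mem_singleton] at h''
          exact hxS (by rw [h'']; simp)
        · have := cardE01 S (Finset.mem_union.2 (Or.inr h''))
          have := cardE3 S hS3
          omega
      · rw [hE2, Finset.mem_image] at h'
        obtain ⟨z, hz, hzeq⟩ := h'
        exact hxS (by rw [← hzeq]; simp)
    · rw [hE4, Finset.mem_image] at h
      obtain ⟨z, hz, hzeq⟩ := h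
      exact hxS (by rw [← hzeq]; simp)
  have hinj1 : ∀ z₁ ∈ B.toFinset, ∀ z₂ ∈ B.toFinset,
      ({y, z₁} : Finset α) = {y, z₂} → z₁ = z₂ := by
    intro z₁ h₁ z₂ h₂ heq
    have : z₁ ∈ ({y, z₂} : Finset α) := by rw [← heq]; simp
    simp only [Finset.mem_insert, Finset.mem_singleton] at this
    rcases this with h | h
    · exact absurd h (hBne _ (hBmem _ h₁)).2
    · exact h
  have hinj2 : ∀ z₁ ∈ B.toFinset, ∀ z₂ ∈ B.toFinset,
      ({x, y, z₁} : Finset α) = {x, y, z₂} → z₁ = z₂ := by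
    intro z₁ h₁ z₂ h₂ heq
    have : z₁ ∈ ({x, y, z₂} : Finset α) := by rw [← heq]; simp
    simp only [Finset.mem_insert, Finset.mem_singleton] at this
    have hne := hBne z₁ (hBmem _ h₁)
    rcases this with h | h | h
    · exact absurd h hne.1
    · exact absurd h hne.2
    · exact h
  have hinj4 : ∀ z₁ ∈ C.toFinset, ∀ z₂ ∈ C.toFinset,
      ({x, y, z₁} : Finset α) = {x, y, z₂} → z₁ = z₂ := by
    intro z₁ h₁ z₂ h₂ heq
    have : z₁ ∈ ({x, y, z₂} : Finset α) := by rw [← heq]; simp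
    simp only [Finset.mem_insert, Finset.mem_singleton] at this
    have hne := hCne z₁ (hCmem _ h₁)
    rcases this with h | h | h
    · exact absurd h hne.1
    · exact absurd h hne.2
    · exact h
  have hinj3 : ∀ p ∈ PP, ∀ q ∈ PP,
      ({y, p.1, p.2} : Finset α) = {y, q.1, q.2} → p = q := by
    intro p hp q hq heq
    obtain ⟨hp1, hp2, hpne, hplt⟩ := hPPfacts p hp
    obtain ⟨hq1, hq2, hqne, hqlt⟩ := hPPfacts q hq
    have m1 : p.1 ∈ ({y, q.1, q.2} : Finset α) := by rw [← heq]; simp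
    have m2 : p.2 ∈ ({y, q.1, q.2} : Finset α) := by rw [← heq]; simp
    simp only [Finset.mem_insert, Finset.mem_singleton] at m1 m2
    rcases m1 with h1 | h1 | h1
    · exact absurd h1 (hBne _ hp1).2
    · rcases m2 with h2 | h2 | h2
      · exact absurd h2 (hBCne _ hp2).2
      · exact absurd (h1.trans h2.symm) hpne
      · exact Prod.ext h1 h2
    · rcases m2 with h2 | h2 | h2
      · exact absurd h2 (hBCne _ hp2).2
      · exfalso
        rw [h1, h2] at hplt
        omega
      · exfalso
        rw [h1] at hplt
        rw [h2] at hplt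
        omega
  have hstart : (d3 π v : ℤ) - d3 π2 v
      = ∑ S ∈ (Finset.univ : Finset α).powerset,
        ((if cnd π v S then (1 : ℤ) else 0) - (if cnd π2 v S then 1 else 0)) := by
    rw [d3_eq_sum, d3_eq_sum]
    push_cast
    rw [Finset.sum_sub_distrib]
  rw [hstart, ← Finset.sum_subset hsub hzero, he2,
    Finset.sum_union hd01243, Finset.sum_union hd0124, Finset.sum_union hd012,
    Finset.sum_union hd01,
    hE0, Finset.sum_singleton, hE1, Finset.sum_image hinj1, hE2, Finset.sum_image hinj2,
    hE4, Finset.sum_image hinj4, hE3, Finset.sum_image hinj3]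
  congr 1
  · congr 1
    · congr 1
      · congr 1
        · exact ite_cnd_eval hr hr2 hv (by simp) M1 (by simp) M1' card_pair_le3
        · refine Finset.sum_congr rfl (fun z hz => ?_)
          exact ite_cnd_eval hr hr2 hv (by simp) (M2 z (hBmem z hz)) (by simp)
            (M2' z (hBmem z hz)) card_pair_le3
      · refine Finset.sum_congr rfl (fun z hz => ?_)
        exact ite_cnd_eval hr hr2 hv (by simp) (M3 z (Or.inl (hBmem z hz))) (by simp)
          (M3B' z (hBmem z hz)) card_triple_le3
    · refine Finset.sum_congr rfl (fun z hz => ?_)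
      exact ite_cnd_eval hr hr2 hv (by simp) (M3 z (Or.inr (hCmem z hz))) (by simp)
        (M3C' z (hCmem z hz)) card_triple_le3
  · refine Finset.sum_congr rfl (fun p hp => ?_)
    exact ite_cnd_eval hr hr2 hv (by simp) (M4 p hp) (by simp) (M4' p hp) card_triple_le3

end Diff2
section Assemble

set_option linter.unusedSectionVars false
set_option maxHeartbeats 1600000
variable [DecidableEq α] [Fintype α]

variable {V : Multiset (List α)}

lemma sum_ite_pair (hV : ∀ v ∈ V, IsRanking v) {a b : α} (hab : a ≠ b) :
    (V.map (fun v => if mins v {a, b} a then (1 : ℤ) else 0)).sum = (nn2 V a b : ℤ) := by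
  rw [msum_map_congr V _ (fun v => if v.idxOf a < v.idxOf b then (1 : ℤ) else 0)
    (fun v hv => if_congr (mins_pair (hV v hv) hab) rfl rfl), msum_map_ite]
  rfl

lemma sum_ite_pair' (hV : ∀ v ∈ V, IsRanking v) {a b : α} (hab : a ≠ b) :
    (V.map (fun v => if mins v {a, b} b then (1 : ℤ) else 0)).sum = (nn2 V b a : ℤ) := by
  have h : ({a, b} : Finset α) = {b, a} := Finset.pair_comm a b
  rw [msum_map_congr V _ (fun v => if mins v {b, a} b then (1 : ℤ) else 0)
    (fun v hv => by rw [h]), sum_ite_pair hV hab.symm]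

lemma sum_ite_triple (hV : ∀ v ∈ V, IsRanking v) {a b c : α} (hab : a ≠ b) (hac : a ≠ c) :
    (V.map (fun v => if mins v {a, b, c} a then (1 : ℤ) else 0)).sum = (tc V a b c : ℤ) := by
  rw [msum_map_congr V _
    (fun v => if v.idxOf a < v.idxOf b ∧ v.idxOf a < v.idxOf c then (1 : ℤ) else 0)
    (fun v hv => if_congr (mins_triple (hV v hv) hab hac) rfl rfl), msum_map_ite]
  rfl

lemma sum_ite_triple₂ (hV : ∀ v ∈ V, IsRanking v) {a b c : α}
    (hab : a ≠ b) (hbc : b ≠ c) :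
    (V.map (fun v => if mins v {a, b, c} b then (1 : ℤ) else 0)).sum = (tc V b a c : ℤ) := by
  have h : ({a, b, c} : Finset α) = {b, a, c} := Finset.insert_comm a b {c}
  rw [msum_map_congr V _ (fun v => if mins v {b, a, c} b then (1 : ℤ) else 0)
    (fun v hv => by rw [h]), sum_ite_triple hV hab.symm hbc]

lemma sum_ite_triple₃ (hV : ∀ v ∈ V, IsRanking v) {a b c : α}
    (hac : a ≠ c) (hbc : b ≠ c) :
    (V.map (fun v => if mins v {a, b, c} c then (1 : ℤ) else 0)).sum = (tc V c a b : ℤ) := by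
  have h : ({a, b, c} : Finset α) = {c, a, b} := by
    ext u
    simp only [Finset.mem_insert, Finset.mem_singleton]
    tauto
  rw [msum_map_congr V _ (fun v => if mins v {c, a, b} c then (1 : ℤ) else 0)
    (fun v hv => by rw [h]), sum_ite_triple hV hac.symm hbc.symm]

end Assemble
section SumDiff

set_option linter.unusedSectionVars false
set_option maxHeartbeats 1600000
variable [DecidableEq α] [Fintype α]
variable {V : Multiset (List α)}

lemma sumdiff1 {x y : α} {A B C : List α}
    (hr : IsRanking (A ++ (y :: (B ++ x :: C)))) (hV : ∀ v ∈ V, IsRanking v) :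
    (d3V (A ++ (y :: (B ++ x :: C))) V : ℤ) - d3V (A ++ (x :: y :: (B ++ C))) V
    = ((nn2 V x y : ℤ) - nn2 V y x)
      + (∑ z ∈ B.toFinset, ((nn2 V x z : ℤ) - nn2 V z x))
      + (∑ z ∈ B.toFinset ∪ C.toFinset, ((tc V x y z : ℤ) - tc V y x z))
      + (∑ p ∈ (B.toFinset ×ˢ (B.toFinset ∪ C.toFinset)).filter
            (fun p => (A ++ (y :: (B ++ x :: C))).idxOf p.1
              < (A ++ (y :: (B ++ x :: C))).idxOf p.2),
          ((tc V x p.1 p.2 : ℤ) - tc V p.1 x p.2)) := by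
  obtain ⟨hxA, hxB, hxC, hyA, hyB, hyC, hxy, hAf, hBf, hCf, hAnd, hBnd, hCnd⟩ := ndfacts hr.1
  have hmain : (d3V (A ++ (y :: (B ++ x :: C))) V : ℤ) - d3V (A ++ (x :: y :: (B ++ C))) V
      = (V.map (fun v =>
        ((if mins v {x, y} x then (1 : ℤ) else 0) - (if mins v {x, y} y then 1 else 0))
        + (∑ z ∈ B.toFinset,
            ((if mins v {x, z} x then (1 : ℤ) else 0) - (if mins v {x, z} z then 1 else 0)))
        + (∑ z ∈ B.toFinset ∪ C.toFinset,
            ((if mins v {x, y, z} x then (1 : ℤ) else 0)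
              - (if mins v {x, y, z} y then 1 else 0)))
        + (∑ p ∈ (B.toFinset ×ˢ (B.toFinset ∪ C.toFinset)).filter
              (fun p => (A ++ (y :: (B ++ x :: C))).idxOf p.1
                < (A ++ (y :: (B ++ x :: C))).idxOf p.2),
            ((if mins v {x, p.1, p.2} x then (1 : ℤ) else 0)
              - (if mins v {x, p.1, p.2} p.1 then 1 else 0))))).sum := by
    rw [d3V_eq, d3V_eq, ← msum_map_sub]
    exact msum_map_congr V _ _ (fun v hv => diff1 hr (hV v hv))
  rw [hmain]
  simp only [msum_map_add, msum_map_finsum, msum_map_sub]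
  congr 1
  · congr 1
    · congr 1
      · rw [sum_ite_pair hV hxy, sum_ite_pair' hV hxy]
      · refine Finset.sum_congr rfl (fun z hz => ?_)
        have hzB := List.mem_toFinset.1 hz
        have hzx : x ≠ z := Ne.symm (hBf z hzB).2.1
        rw [sum_ite_pair hV hzx, sum_ite_pair' hV hzx]
    · refine Finset.sum_congr rfl (fun z hz => ?_)
      have hz' : z ∈ B ∨ z ∈ C := by
        rcases Finset.mem_union.1 hz with h | h
        · exact Or.inl (List.mem_toFinset.1 h)
        · exact Or.inr (List.mem_toFinset.1 h)
      have hzx : x ≠ z := by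
        rcases hz' with h | h
        · exact Ne.symm (hBf z h).2.1
        · exact Ne.symm (hCf z h).1
      have hzy : y ≠ z := by
        rcases hz' with h | h
        · exact Ne.symm (hBf z h).2.2
        · exact Ne.symm (hCf z h).2
      rw [sum_ite_triple hV hxy hzx, sum_ite_triple₂ hV hxy hzy]
  · refine Finset.sum_congr rfl (fun p hp => ?_)
    obtain ⟨hmem, hlt⟩ := Finset.mem_filter.1 hp
    obtain ⟨h1, h2⟩ := Finset.mem_product.1 hmem
    have hp1B := List.mem_toFinset.1 h1
    have hp2' : p.2 ∈ B ∨ p.2 ∈ C := by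
      rcases Finset.mem_union.1 h2 with h | h
      · exact Or.inl (List.mem_toFinset.1 h)
      · exact Or.inr (List.mem_toFinset.1 h)
    have hxp1 : x ≠ p.1 := Ne.symm (hBf _ hp1B).2.1
    have hxp2 : x ≠ p.2 := by
      rcases hp2' with h | h
      · exact Ne.symm (hBf _ h).2.1
      · exact Ne.symm (hCf _ h).1
    have hp12 : p.1 ≠ p.2 := fun h => by rw [h] at hlt; omega
    rw [sum_ite_triple hV hxp1 hxp2, sum_ite_triple₂ hV hxp1 hp12]

lemma sumdiff2 {x y : α} {A B C : List α}
    (hr : IsRanking (A ++ (y :: (B ++ x :: C)))) (hV : ∀ v ∈ V, IsRanking v) :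
    (d3V (A ++ (y :: (B ++ x :: C))) V : ℤ) - d3V (A ++ (B ++ x :: y :: C)) V
    = ((nn2 V x y : ℤ) - nn2 V y x)
      + (∑ z ∈ B.toFinset, ((nn2 V z y : ℤ) - nn2 V y z))
      + (∑ z ∈ B.toFinset, ((tc V z x y : ℤ) - tc V y x z))
      + (∑ z ∈ C.toFinset, ((tc V x y z : ℤ) - tc V y x z))
      + (∑ p ∈ (B.toFinset ×ˢ (B.toFinset ∪ C.toFinset)).filter
            (fun p => (A ++ (y :: (B ++ x :: C))).idxOf p.1
              < (A ++ (y :: (B ++ x :: C))).idxOf p.2),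
          ((tc V p.1 y p.2 : ℤ) - tc V y p.1 p.2)) := by
  obtain ⟨hxA, hxB, hxC, hyA, hyB, hyC, hxy, hAf, hBf, hCf, hAnd, hBnd, hCnd⟩ := ndfacts hr.1
  have hmain : (d3V (A ++ (y :: (B ++ x :: C))) V : ℤ) - d3V (A ++ (B ++ x :: y :: C)) V
      = (V.map (fun v =>
        ((if mins v {x, y} x then (1 : ℤ) else 0) - (if mins v {x, y} y then 1 else 0))
        + (∑ z ∈ B.toFinset,
            ((if mins v {y, z} z then (1 : ℤ) else 0) - (if mins v {y, z} y then 1 else 0)))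
        + (∑ z ∈ B.toFinset,
            ((if mins v {x, y, z} z then (1 : ℤ) else 0)
              - (if mins v {x, y, z} y then 1 else 0)))
        + (∑ z ∈ C.toFinset,
            ((if mins v {x, y, z} x then (1 : ℤ) else 0)
              - (if mins v {x, y, z} y then 1 else 0)))
        + (∑ p ∈ (B.toFinset ×ˢ (B.toFinset ∪ C.toFinset)).filter
              (fun p => (A ++ (y :: (B ++ x :: C))).idxOf p.1
                < (A ++ (y :: (B ++ x :: C))).idxOf p.2),
            ((if mins v {y, p.1, p.2} p.1 then (1 : ℤ) else 0)
              - (if mins v {y, p.1, p.2} y then 1 else 0))))).sum := by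
    rw [d3V_eq, d3V_eq, ← msum_map_sub]
    exact msum_map_congr V _ _ (fun v hv => diff2 hr (hV v hv))
  rw [hmain]
  simp only [msum_map_add, msum_map_finsum, msum_map_sub]
  congr 1
  · congr 1
    · congr 1
      · congr 1
        · rw [sum_ite_pair hV hxy, sum_ite_pair' hV hxy]
        · refine Finset.sum_congr rfl (fun z hz => ?_)
          have hzB := List.mem_toFinset.1 hz
          have hzy : y ≠ z := Ne.symm (hBf z hzB).2.2
          rw [sum_ite_pair hV hzy, sum_ite_pair' hV hzy]
      · refine Finset.sum_congr rfl (fun z hz => ?_)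
        have hzB := List.mem_toFinset.1 hz
        have hzx : x ≠ z := Ne.symm (hBf z hzB).2.1
        have hzy : y ≠ z := Ne.symm (hBf z hzB).2.2
        rw [sum_ite_triple₃ hV hzx hzy, sum_ite_triple₂ hV hxy hzy]
    · refine Finset.sum_congr rfl (fun z hz => ?_)
      have hzC := List.mem_toFinset.1 hz
      have hzx : x ≠ z := Ne.symm (hCf z hzC).1
      have hzy : y ≠ z := Ne.symm (hCf z hzC).2
      rw [sum_ite_triple hV hxy hzx, sum_ite_triple₂ hV hxy hzy]
  · refine Finset.sum_congr rfl (fun p hp => ?_)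
    obtain ⟨hmem, hlt⟩ := Finset.mem_filter.1 hp
    obtain ⟨h1, h2⟩ := Finset.mem_product.1 hmem
    have hp1B := List.mem_toFinset.1 h1
    have hp2' : p.2 ∈ B ∨ p.2 ∈ C := by
      rcases Finset.mem_union.1 h2 with h | h
      · exact Or.inl (List.mem_toFinset.1 h)
      · exact Or.inr (List.mem_toFinset.1 h)
    have hyp1 : y ≠ p.1 := Ne.symm (hBf _ hp1B).2.2
    have hyp2 : y ≠ p.2 := by
      rcases hp2' with h | h
      · exact Ne.symm (hBf _ h).2.2
      · exact Ne.symm (hCf _ h).2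
    have hp12 : p.1 ≠ p.2 := fun h => by rw [h] at hlt; omega
    rw [sum_ite_triple₂ hV hyp1 hp12, sum_ite_triple hV hyp1 hyp2]

end SumDiff
section Key

set_option linter.unusedSectionVars false
set_option maxHeartbeats 1600000
variable [DecidableEq α] [Fintype α]
variable {V : Multiset (List α)}

lemma key {x y : α} {A B C : List α}
    (hr : IsRanking (A ++ (y :: (B ++ x :: C)))) (hV : ∀ v ∈ V, IsRanking v)
    (hQ : ∀ z : α, z ≠ x → z ≠ y → 0 ≤ Qq V x y z)
    (hsum : 2 * del V x y ≥ ∑ z ∈ (Finset.univ : Finset α) \ {x, y},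
      max 0 (- Pq V x y z + ∑ t ∈ (Finset.univ : Finset α) \ {x, y, z},
        max 0 (Ss V y x z t))) :
    d3V (A ++ (x :: y :: (B ++ C))) V ≤ d3V (A ++ (y :: (B ++ x :: C))) V ∨
    d3V (A ++ (B ++ x :: y :: C)) V ≤ d3V (A ++ (y :: (B ++ x :: C))) V := by
  obtain ⟨hxA, hxB, hxC, hyA, hyB, hyC, hxy, hAf, hBf, hCf, hAnd, hBnd, hCnd⟩ := ndfacts hr.1
  set π : List α := A ++ (y :: (B ++ x :: C)) with hπdef
  set PP : Finset (α × α) := (B.toFinset ×ˢ (B.toFinset ∪ C.toFinset)).filter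
      (fun p => π.idxOf p.1 < π.idxOf p.2) with hPPdef
  have e1 := sumdiff1 (V := V) hr hV
  have e2 := sumdiff2 (V := V) hr hV
  have hBC : Disjoint B.toFinset C.toFinset := by
    rw [Finset.disjoint_left]
    intro z h1 h2
    exact (hBf z (List.mem_toFinset.1 h1)).1 (List.mem_toFinset.1 h2)
  rw [Finset.sum_union hBC] at e1
  -- distinctness facts for B, C, PP elements
  have hBd : ∀ z ∈ B.toFinset, x ≠ z ∧ y ≠ z := by
    intro z hz
    have h := hBf z (List.mem_toFinset.1 hz)
    exact ⟨Ne.symm h.2.1, Ne.symm h.2.2⟩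
  have hCd : ∀ z ∈ C.toFinset, x ≠ z ∧ y ≠ z := by
    intro z hz
    have h := hCf z (List.mem_toFinset.1 hz)
    exact ⟨Ne.symm h.1, Ne.symm h.2⟩
  have hPd : ∀ p ∈ PP, (x ≠ p.1 ∧ y ≠ p.1) ∧ (x ≠ p.2 ∧ y ≠ p.2) ∧ p.1 ≠ p.2 := by
    intro p hp
    obtain ⟨hmem, hlt⟩ := Finset.mem_filter.1 hp
    obtain ⟨h1, h2⟩ := Finset.mem_product.1 hmem
    have hp1 := hBf _ (List.mem_toFinset.1 h1)
    have hp2 : p.2 ≠ x ∧ p.2 ≠ y := by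
      rcases Finset.mem_union.1 h2 with h | h
      · have := hBf _ (List.mem_toFinset.1 h); exact ⟨this.2.1, this.2.2⟩
      · exact hCf _ (List.mem_toFinset.1 h)
    exact ⟨⟨Ne.symm hp1.2.1, Ne.symm hp1.2.2⟩, ⟨Ne.symm hp2.1, Ne.symm hp2.2⟩,
      fun h => by rw [h] at hlt; omega⟩
  -- grouped sums
  have hBgroup : (∑ z ∈ B.toFinset, ((nn2 V x z : ℤ) - nn2 V z x))
      + (∑ z ∈ B.toFinset, ((tc V x y z : ℤ) - tc V y x z))
      + (∑ z ∈ B.toFinset, ((nn2 V z y : ℤ) - nn2 V y z))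
      + (∑ z ∈ B.toFinset, ((tc V z x y : ℤ) - tc V y x z))
      = ∑ z ∈ B.toFinset, Pq V x y z := by
    rw [← Finset.sum_add_distrib, ← Finset.sum_add_distrib, ← Finset.sum_add_distrib]
    refine Finset.sum_congr rfl (fun z hz => ?_)
    obtain ⟨h1, h2⟩ := hBd z hz
    have := Pq_eq hV hxy h1 h2
    linarith
  have hCgroup : (∑ z ∈ C.toFinset, ((tc V x y z : ℤ) - tc V y x z))
      + (∑ z ∈ C.toFinset, ((tc V x y z : ℤ) - tc V y x z))
      = ∑ z ∈ C.toFinset, 2 * Qq V x y z := by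
    rw [← Finset.sum_add_distrib]
    refine Finset.sum_congr rfl (fun z hz => ?_)
    obtain ⟨h1, h2⟩ := hCd z hz
    have := Qq_eq hV hxy h1 h2
    linarith
  have hPgroup : (∑ p ∈ PP, ((tc V x p.1 p.2 : ℤ) - tc V p.1 x p.2))
      + (∑ p ∈ PP, ((tc V p.1 y p.2 : ℤ) - tc V y p.1 p.2))
      = - ∑ p ∈ PP, Ss V y x p.1 p.2 := by
    rw [← Finset.sum_add_distrib, ← Finset.sum_neg_distrib]
    refine Finset.sum_congr rfl (fun p hp => ?_)
    obtain ⟨⟨h1, h2⟩, ⟨h3, h4⟩, h5⟩ := hPd p hp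
    exact Ss_eq hV hxy h1 h3 h2 h4 h5
  have hcomb : 2 * (d3V π V : ℤ) - d3V (A ++ (x :: y :: (B ++ C))) V
      - d3V (A ++ (B ++ x :: y :: C)) V
      = 2 * del V x y + (∑ z ∈ B.toFinset, Pq V x y z)
        + (∑ z ∈ C.toFinset, 2 * Qq V x y z) - ∑ p ∈ PP, Ss V y x p.1 p.2 := by
    rw [del]
    linarith [e1, e2, hBgroup, hCgroup, hPgroup]
  -- bounds
  have hQC : 0 ≤ ∑ z ∈ C.toFinset, 2 * Qq V x y z := by
    refine Finset.sum_nonneg (fun z hz => ?_)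
    obtain ⟨h1, h2⟩ := hCd z hz
    have := hQ z (Ne.symm h1) (Ne.symm h2)
    linarith
  have hSsBound : ∑ p ∈ PP, Ss V y x p.1 p.2
      ≤ ∑ z ∈ B.toFinset, ∑ t ∈ (Finset.univ : Finset α) \ {x, y, z},
          max 0 (Ss V y x z t) := by
    rw [hPPdef, Finset.sum_filter, Finset.sum_product]
    refine Finset.sum_le_sum (fun z hz => ?_)
    have step1 : ∑ t ∈ B.toFinset ∪ C.toFinset,
        (if π.idxOf z < π.idxOf t then Ss V y x z t else 0)
        = ∑ t ∈ (B.toFinset ∪ C.toFinset).erase z,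
          (if π.idxOf z < π.idxOf t then Ss V y x z t else 0) := by
      refine (Finset.sum_subset (Finset.erase_subset _ _) (fun t ht htn => ?_)).symm
      have : t = z := by
        by_contra hne
        exact htn (Finset.mem_erase.2 ⟨hne, ht⟩)
      subst this
      simp
    rw [step1]
    calc ∑ t ∈ (B.toFinset ∪ C.toFinset).erase z,
          (if π.idxOf z < π.idxOf t then Ss V y x z t else 0)
        ≤ ∑ t ∈ (B.toFinset ∪ C.toFinset).erase z, max 0 (Ss V y x z t) := by
          refine Finset.sum_le_sum (fun t ht => ?_)
          split_ifs
          · exact le_max_right _ _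
          · exact le_max_left _ _
      _ ≤ ∑ t ∈ (Finset.univ : Finset α) \ {x, y, z}, max 0 (Ss V y x z t) := by
          refine Finset.sum_le_sum_of_subset_of_nonneg ?_ (fun t _ _ => le_max_left _ _)
          intro t ht
          obtain ⟨htz, htBC⟩ := Finset.mem_erase.1 ht
          have hd : t ≠ x ∧ t ≠ y := by
            rcases Finset.mem_union.1 htBC with h | h
            · have := hBf _ (List.mem_toFinset.1 h); exact ⟨this.2.1, this.2.2⟩
            · exact hCf _ (List.mem_toFinset.1 h)
          rw [Finset.mem_sdiff]
          refine ⟨Finset.mem_univ _, ?_⟩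
          simp only [Finset.mem_insert, Finset.mem_singleton]
          push_neg
          exact ⟨hd.1, hd.2, htz⟩
  have hPB : ∑ z ∈ B.toFinset, Pq V x y z
      - (∑ z ∈ B.toFinset, ∑ t ∈ (Finset.univ : Finset α) \ {x, y, z},
          max 0 (Ss V y x z t))
      ≥ - ∑ z ∈ B.toFinset, max 0 (- Pq V x y z
          + ∑ t ∈ (Finset.univ : Finset α) \ {x, y, z}, max 0 (Ss V y x z t)) := by
    rw [← Finset.sum_sub_distrib, ge_iff_le, ← Finset.sum_neg_distrib]
    refine Finset.sum_le_sum (fun z hz => ?_)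
    have := le_max_right (0 : ℤ) (- Pq V x y z
      + ∑ t ∈ (Finset.univ : Finset α) \ {x, y, z}, max 0 (Ss V y x z t))
    linarith
  have hBsub : ∑ z ∈ B.toFinset, max 0 (- Pq V x y z
        + ∑ t ∈ (Finset.univ : Finset α) \ {x, y, z}, max 0 (Ss V y x z t))
      ≤ ∑ z ∈ (Finset.univ : Finset α) \ {x, y}, max 0 (- Pq V x y z
        + ∑ t ∈ (Finset.univ : Finset α) \ {x, y, z}, max 0 (Ss V y x z t)) := by
    refine Finset.sum_le_sum_of_subset_of_nonneg ?_ (fun z _ _ => le_max_left _ _)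
    intro z hz
    obtain ⟨h1, h2⟩ := hBd z hz
    rw [Finset.mem_sdiff]
    refine ⟨Finset.mem_univ _, ?_⟩
    simp only [Finset.mem_insert, Finset.mem_singleton]
    push_neg
    exact ⟨Ne.symm h1, Ne.symm h2⟩
  have hfinal : 0 ≤ 2 * (d3V π V : ℤ) - d3V (A ++ (x :: y :: (B ++ C))) V
      - d3V (A ++ (B ++ x :: y :: C)) V := by
    rw [hcomb]
    linarith [hQC, hSsBound, hPB, hBsub, hsum]
  by_contra hcon
  push_neg at hcon
  obtain ⟨h1, h2⟩ := hcon
  have c1 : (d3V π V : ℤ) < d3V (A ++ (x :: y :: (B ++ C))) V := by exact_mod_cast h1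
  have c2 : (d3V π V : ℤ) < d3V (A ++ (B ++ x :: y :: C)) V := by exact_mod_cast h2
  linarith

end Key
section Final

set_option linter.unusedSectionVars false
variable [DecidableEq α] [Fintype α]

lemma exists_median3 (V : Multiset (List α)) : ∃ π : List α, IsMedian3 V π := by
  classical
  set l0 : List α := (Finset.univ : Finset α).toList with hl0def
  have hl0 : IsRanking l0 := ⟨Finset.nodup_toList _, fun a => by simp [hl0def]⟩
  have hmem : ∀ m : List α, IsRanking m → m ∈ l0.permutations.toFinset := by
    intro m hm
    rw [List.mem_toFinset, List.mem_permutations]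
    exact (List.perm_ext_iff_of_nodup hm.1 hl0.1).2 (fun a => by simp [hm.2 a, hl0.2 a])
  have hne : l0.permutations.toFinset.Nonempty := ⟨l0, hmem l0 hl0⟩
  obtain ⟨π, hπmem, hmin⟩ := Finset.exists_min_image l0.permutations.toFinset
    (fun m => d3V m V) hne
  have hperm : π.Perm l0 := List.mem_permutations.1 (List.mem_toFinset.1 hπmem)
  have hπrank : IsRanking π := ⟨hperm.nodup_iff.2 hl0.1, fun a => hperm.mem_iff.2 (hl0.2 a)⟩
  exact ⟨π, hπrank, fun m hm => hmin m (hmem m hm)⟩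

end Final
theorem stmt19 [Fintype α] [DecidableEq α]
    (V : Multiset (List α)) (hV : ∀ v ∈ V, IsRanking v)
    (x y : α) (hxy : x ≠ y)
    (hmaj : 0 ≤ del V x y)
    (hQ : ∀ z : α, z ≠ x → z ≠ y → 0 ≤ Qq V x y z)
    (hsum : 2 * del V x y ≥ ∑ z ∈ (Finset.univ : Finset α) \ {x, y},
      max 0 (- Pq V x y z + ∑ t ∈ (Finset.univ : Finset α) \ {x, y, z}, max 0 (Ss V y x z t))) :
    ∃ π : List α, IsMedian3 V π ∧ π.idxOf x < π.idxOf y := by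
  classical
  obtain ⟨π, hmed⟩ := exists_median3 (α := α) V
  by_cases hord : π.idxOf x < π.idxOf y
  · exact ⟨π, hmed, hord⟩
  -- y comes before x in π; decompose π = A ++ y :: (B ++ x :: C)
  have hyx : π.idxOf y < π.idxOf x := by
    have hne := idx_ne hmed.1 hxy
    omega
  obtain ⟨A, R, hAR⟩ := List.append_of_mem (hmed.1.2 y)
  have hyA : y ∉ A := by
    intro hyA'
    have := hmed.1.1
    rw [hAR] at this
    exact (List.disjoint_of_nodup_append this) hyA' (by simp)
  have hidxy : π.idxOf y = A.length := by
    rw [hAR, List.idxOf_append_of_notMem hyA, List.idxOf_cons_self]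
    omega
  have hxR : x ∈ R := by
    have hxπ := hmed.1.2 x
    rw [hAR] at hxπ
    rcases List.mem_append.1 hxπ with h | h
    · exfalso
      have : π.idxOf x = A.idxOf x := by rw [hAR]; exact List.idxOf_append_of_mem h
      have := List.idxOf_lt_length_iff.2 h
      omega
    · rcases List.mem_cons.1 h with h' | h'
      · exact absurd h' hxy
      · exact h'
  obtain ⟨B, C, hBC⟩ := List.append_of_mem hxR
  have hπeq : π = A ++ (y :: (B ++ x :: C)) := by rw [hAR, hBC]
  have hr : IsRanking (A ++ (y :: (B ++ x :: C))) := hπeq ▸ hmed.1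
  have hd3 : d3V (A ++ (y :: (B ++ x :: C))) V = d3V π V := by rw [hπeq]
  obtain ⟨p1A, p1x, p1y, p1B, p1C⟩ := pos1 hr.1
  obtain ⟨p2A, p2B, p2x, p2y, p2C⟩ := pos2 hr.1
  rcases key (V := V) hr hV hQ hsum with hle | hle
  · refine ⟨A ++ (x :: y :: (B ++ C)), ⟨ranking1 hr, fun m hm => ?_⟩, ?_⟩
    · calc d3V (A ++ (x :: y :: (B ++ C))) V ≤ d3V (A ++ (y :: (B ++ x :: C))) V := hle
        _ = d3V π V := hd3
        _ ≤ d3V m V := hmed.2 m hm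
    · rw [p1x, p1y]; omega
  · refine ⟨A ++ (B ++ x :: y :: C), ⟨ranking2 hr, fun m hm => ?_⟩, ?_⟩
    · calc d3V (A ++ (B ++ x :: y :: C)) V ≤ d3V (A ++ (y :: (B ++ x :: C))) V := hle
        _ = d3V π V := hd3
        _ ≤ d3V m V := hmed.2 m hm
    · rw [p2x, p2y]; omega
end
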